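/- Let n be a sufficiently large multiple of 7. In the (1:S_b)-biased connectivity game on K_n (Maker moving first), if b ≥ 3n/7 then Breaker has a winning strategy. Hence the threshold bias b for the (1:S_b)-biased connectivity game satisfies b ≤ 3n/7. -/

import Mathlib

open Finset

/-- A position in a Maker–Breaker game on the edge set of `K_n`:
`M` is the set of edges claimed by Maker, `B` those claimed by Breaker. -/
structure MBPos (n : ℕ) where
  M : Finset (Sym2 (Fin n))
  B : Finset (Sym2 (Fin n))

/-- The board: the edge set of the complete graph `K_n`, i.e. all
non-diagonal unordered pairs of vertices. -/
def board (n : ℕ) : Finset (Sym2 (Fin n)) :=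
  Finset.univ.filter (fun e => ¬ e.IsDiag)

/-- Maker claims edge `e` if it is a previously unclaimed edge of the board;
an illegal choice leaves the position unchanged (this never helps Maker,
whose goal is monotone in her set of edges). -/
def makerMove {n : ℕ} (p : MBPos n) (e : Sym2 (Fin n)) : MBPos n :=
  if e ∈ board n ∧ e ∉ p.M ∧ e ∉ p.B then ⟨insert e p.M, p.B⟩ else p

/-- Breaker claims the set `S` of edges. -/
def breakerMove {n : ℕ} (p : MBPos n) (S : Finset (Sym2 (Fin n))) : MBPos n :=
  ⟨p.M, p.B ∪ S⟩

/-- A Breaker strategy `bs` is legal for the bias-structure predicate `ok` if at every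
position it claims a set of previously unclaimed edges of the board satisfying `ok`. -/
def LegalBreaker {n : ℕ} (ok : Finset (Sym2 (Fin n)) → Prop)
    (bs : MBPos n → Finset (Sym2 (Fin n))) : Prop :=
  ∀ p : MBPos n, bs p ⊆ board n ∧ (∀ e ∈ bs p, e ∉ p.M ∧ e ∉ p.B) ∧ ok (bs p)

/-- The sequence of positions (one per half-move) when Breaker moves first:
at even steps Breaker moves, at odd steps Maker moves. -/
def playBF {n : ℕ} (ms : MBPos n → Sym2 (Fin n)) (bs : MBPos n → Finset (Sym2 (Fin n))) :
    ℕ → MBPos n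
  | 0 => ⟨∅, ∅⟩
  | k + 1 =>
    let p := playBF ms bs k
    if k % 2 = 0 then breakerMove p (bs p) else makerMove p (ms p)

/-- The sequence of positions (one per half-move) when Maker moves first:
at even steps Maker moves, at odd steps Breaker moves. -/
def playMF {n : ℕ} (ms : MBPos n → Sym2 (Fin n)) (bs : MBPos n → Finset (Sym2 (Fin n))) :
    ℕ → MBPos n
  | 0 => ⟨∅, ∅⟩
  | k + 1 =>
    let p := playMF ms bs k
    if k % 2 = 0 then makerMove p (ms p) else breakerMove p (bs p)

/-- Maker (moving second, Breaker first) has a winning strategy: some Maker strategy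
guarantees, against every legal Breaker strategy, that at some point Maker's claimed
edges satisfy the winning predicate `win`. -/
def MakerWinsBF {n : ℕ} (ok : Finset (Sym2 (Fin n)) → Prop)
    (win : Finset (Sym2 (Fin n)) → Prop) : Prop :=
  ∃ ms, ∀ bs, LegalBreaker ok bs → ∃ t, win (playBF ms bs t).M

/-- Maker (moving first) has a winning strategy. -/
def MakerWinsMF {n : ℕ} (ok : Finset (Sym2 (Fin n)) → Prop)
    (win : Finset (Sym2 (Fin n)) → Prop) : Prop :=
  ∃ ms, ∀ bs, LegalBreaker ok bs → ∃ t, win (playMF ms bs t).M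

/-- Breaker (moving second, Maker first) has a winning strategy: some legal Breaker
strategy guarantees that Maker's claimed edges never satisfy `win`. -/
def BreakerWinsMF {n : ℕ} (ok : Finset (Sym2 (Fin n)) → Prop)
    (win : Finset (Sym2 (Fin n)) → Prop) : Prop :=
  ∃ bs, LegalBreaker ok bs ∧ ∀ ms, ∀ t, ¬ win (playMF ms bs t).M

/-- Breaker (moving first) has a winning strategy. -/
def BreakerWinsBF {n : ℕ} (ok : Finset (Sym2 (Fin n)) → Prop)
    (win : Finset (Sym2 (Fin n)) → Prop) : Prop :=
  ∃ bs, LegalBreaker ok bs ∧ ∀ ms, ∀ t, ¬ win (playBF ms bs t).M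

/-- `(1:K_m)` clique bias: the claimed edges all have their endpoints inside a
single set of at most `m` vertices (i.e. they form a subgraph of a copy of `K_m`). -/
def CliqueBias {n : ℕ} (m : ℕ) (S : Finset (Sym2 (Fin n))) : Prop :=
  ∃ V : Finset (Fin n), V.card ≤ m ∧ ∀ e ∈ S, ∀ v : Fin n, v ∈ e → v ∈ V

/-- `(1:E_b)` matching bias: at most `b` pairwise vertex-disjoint edges. -/
def MatchingBias {n : ℕ} (b : ℕ) (S : Finset (Sym2 (Fin n))) : Prop :=
  S.card ≤ b ∧ ∀ e ∈ S, ∀ f ∈ S, e ≠ f → ∀ v : Fin n, v ∈ e → v ∉ f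

/-- `(1:S_b)` star bias: at most `b` edges sharing a common endpoint (the center). -/
def StarBias {n : ℕ} (b : ℕ) (S : Finset (Sym2 (Fin n))) : Prop :=
  S.card ≤ b ∧ ∃ v : Fin n, ∀ e ∈ S, v ∈ e

/-- Winning predicate for the triangle game: Maker's edges contain a triangle. -/
def TriangleWin {n : ℕ} (M : Finset (Sym2 (Fin n))) : Prop :=
  ∃ u v w : Fin n, u ≠ v ∧ u ≠ w ∧ v ≠ w ∧
    s(u, v) ∈ M ∧ s(u, w) ∈ M ∧ s(v, w) ∈ M

/-- Winning predicate for the connectivity game: Maker's edges form a connected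
spanning subgraph of `K_n`. -/
def ConnWin {n : ℕ} (M : Finset (Sym2 (Fin n))) : Prop :=
  (SimpleGraph.fromEdgeSet (M : Set (Sym2 (Fin n)))).Connected

/-- Winning predicate for the Hamiltonicity game: Maker's edges contain a
Hamilton cycle. -/
def HamWin {n : ℕ} (M : Finset (Sym2 (Fin n))) : Prop :=
  ∃ (a : Fin n) (p : (SimpleGraph.fromEdgeSet (M : Set (Sym2 (Fin n)))).Walk a a),
    p.IsHamiltonianCycle

/-- The degree of vertex `v` in the graph given by the edge set `E`. -/
def degIn {n : ℕ} (E : Finset (Sym2 (Fin n))) (v : Fin n) : ℕ :=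
  (E.filter (fun e => v ∈ e)).card

/- ===================== Development ===================== -/
namespace SBC

open scoped Classical

variable {n : ℕ}

/-- a vertex is fresh if Maker has claimed no edge at it -/
def FR (p : MBPos n) : Finset (Fin n) :=
  Finset.univ.filter (fun v => ∀ e ∈ p.M, v ∉ e)

/-- unclaimed board edges at `v` -/
def unclAt (p : MBPos n) (v : Fin n) : Finset (Sym2 (Fin n)) :=
  (board n).filter (fun e => v ∈ e ∧ e ∉ p.M ∧ e ∉ p.B)

/-- Breaker degree -/
def bdeg (p : MBPos n) (v : Fin n) : ℕ := degIn p.B v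

/-- good position : basic sanity -/
def GP (p : MBPos n) : Prop :=
  p.M ⊆ board n ∧ p.B ⊆ board n ∧ Disjoint p.M p.B

lemma mem_FR {p : MBPos n} {v : Fin n} : v ∈ FR p ↔ ∀ e ∈ p.M, v ∉ e := by
  simp [FR]

lemma mem_unclAt {p : MBPos n} {v : Fin n} {e : Sym2 (Fin n)} :
    e ∈ unclAt p v ↔ e ∈ board n ∧ v ∈ e ∧ e ∉ p.M ∧ e ∉ p.B := by
  simp [unclAt, and_assoc]

lemma mem_board_iff {e : Sym2 (Fin n)} : e ∈ board n ↔ ¬ e.IsDiag := by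
  simp [board]

lemma mk_mem_board {u v : Fin n} (h : u ≠ v) : s(u, v) ∈ board n := by
  simp [board, Sym2.mk_isDiag_iff, h]

/-- number of board edges at a vertex -/
lemma card_edgesAt (v : Fin n) :
    ((board n).filter (fun e => v ∈ e)).card = n - 1 := by
  classical
  have h1 : ((board n).filter (fun e => v ∈ e)).card = (Finset.univ.erase v).card := by
    apply Finset.card_bij (fun e he => Sym2.Mem.other' ((Finset.mem_filter.1 he).2))
    · intro e he
      have hb := (Finset.mem_filter.1 he).1
      have hv := (Finset.mem_filter.1 he).2
      have hd : ¬ e.IsDiag := mem_board_iff.1 hb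
      refine Finset.mem_erase.2 ⟨?_, Finset.mem_univ _⟩
      intro hEq
      have := Sym2.other_spec' hv
      rw [hEq] at this
      apply hd
      rw [← this]
      exact Sym2.mk_isDiag_iff.2 rfl
    · intro e1 h1 e2 h2 hEq
      have s1 := Sym2.other_spec' ((Finset.mem_filter.1 h1).2)
      have s2 := Sym2.other_spec' ((Finset.mem_filter.1 h2).2)
      rw [← s1, ← s2, hEq]
    · intro w hw
      have hwv : w ≠ v := (Finset.mem_erase.1 hw).1
      have hmem : v ∈ s(v, w) := by simp
      refine ⟨s(v, w), ?_, ?_⟩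
      · refine Finset.mem_filter.2 ⟨mk_mem_board (fun h => hwv h.symm), hmem⟩
      · -- other' of v in s(v,w) is w
        have hsp := Sym2.other_spec' (a := v) (z := s(v, w)) hmem
        have : s(v, Sym2.Mem.other' hmem) = s(v, w) := hsp
        exact Sym2.congr_right.1 this
  rw [h1, Finset.card_erase_of_mem (Finset.mem_univ v), Finset.card_univ, Fintype.card_fin]

/-- the three classes of edges at a vertex partition all board edges at it -/
lemma unclAt_card (p : MBPos n) (hGP : GP p) (v : Fin n) :
    (unclAt p v).card + degIn p.M v + degIn p.B v = n - 1 := by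
  classical
  obtain ⟨hM, hB, hMB⟩ := hGP
  have hsplit : (board n).filter (fun e => v ∈ e) =
      unclAt p v ∪ (p.M.filter (fun e => v ∈ e)) ∪ (p.B.filter (fun e => v ∈ e)) := by
    ext e
    simp only [Finset.mem_filter, Finset.mem_union, mem_unclAt]
    constructor
    · rintro ⟨hb, hv⟩
      by_cases hM' : e ∈ p.M
      · exact Or.inl (Or.inr ⟨hM', hv⟩)
      · by_cases hB' : e ∈ p.B
        · exact Or.inr ⟨hB', hv⟩
        · exact Or.inl (Or.inl ⟨hb, hv, hM', hB'⟩)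
    · rintro ((⟨hb, hv, _, _⟩ | ⟨hm, hv⟩) | ⟨hb', hv⟩)
      · exact ⟨hb, hv⟩
      · exact ⟨hM hm, hv⟩
      · exact ⟨hB hb', hv⟩
  have hd1 : Disjoint (unclAt p v) (p.M.filter (fun e => v ∈ e)) := by
    refine Finset.disjoint_left.2 ?_
    intro e he hm
    exact (mem_unclAt.1 he).2.2.1 (Finset.mem_filter.1 hm).1
  have hd2 : Disjoint (unclAt p v ∪ p.M.filter (fun e => v ∈ e)) (p.B.filter (fun e => v ∈ e)) := by
    refine Finset.disjoint_left.2 ?_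
    intro e he hb
    rcases Finset.mem_union.1 he with h | h
    · exact (mem_unclAt.1 h).2.2.2 (Finset.mem_filter.1 hb).1
    · exact Finset.disjoint_left.1 hMB (Finset.mem_filter.1 h).1 (Finset.mem_filter.1 hb).1
  calc (unclAt p v).card + degIn p.M v + degIn p.B v
      = ((unclAt p v ∪ p.M.filter (fun e => v ∈ e)) ∪ p.B.filter (fun e => v ∈ e)).card := by
        rw [Finset.card_union_of_disjoint hd2, Finset.card_union_of_disjoint hd1]; rfl
    _ = n - 1 := by rw [← hsplit]; exact card_edgesAt v

/-- for a fresh vertex, unclaimed + bdeg = n - 1 -/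
lemma unclAt_card_fresh (p : MBPos n) (hGP : GP p) {v : Fin n} (hv : v ∈ FR p) :
    (unclAt p v).card + bdeg p v = n - 1 := by
  have h := unclAt_card p hGP v
  have hz : degIn p.M v = 0 := by
    simp only [degIn, Finset.card_eq_zero]
    refine Finset.filter_eq_empty_iff.2 ?_
    intro e he
    exact mem_FR.1 hv e he
  rw [hz] at h
  simpa [bdeg] using h

end SBC
namespace SBC
open scoped Classical
variable {n : ℕ}

/-! ### effect lemmas -/

lemma breakerMove_M (p : MBPos n) (S) : (breakerMove p S).M = p.M := rfl
lemma breakerMove_B (p : MBPos n) (S) : (breakerMove p S).B = p.B ∪ S := rfl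

lemma FR_breakerMove (p : MBPos n) (S) : FR (breakerMove p S) = FR p := rfl

lemma makerMove_cases (p : MBPos n) (e : Sym2 (Fin n)) :
    (makerMove p e = p) ∨
    (e ∈ board n ∧ e ∉ p.M ∧ e ∉ p.B ∧ makerMove p e = ⟨insert e p.M, p.B⟩) := by
  unfold makerMove
  by_cases h : e ∈ board n ∧ e ∉ p.M ∧ e ∉ p.B
  · right
    exact ⟨h.1, h.2.1, h.2.2, by rw [if_pos h]⟩
  · left; rw [if_neg h]

lemma makerMove_B (p : MBPos n) (e) : (makerMove p e).B = p.B := by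
  rcases makerMove_cases p e with h | ⟨_, _, _, h⟩ <;> rw [h]

lemma makerMove_M_subset (p : MBPos n) (e) : p.M ⊆ (makerMove p e).M := by
  intro f hf
  rcases makerMove_cases p e with h | ⟨_, _, _, h⟩ <;> rw [h]
  · exact hf
  · exact Finset.mem_insert_of_mem hf

lemma FR_makerMove_subset (p : MBPos n) (e) : FR (makerMove p e) ⊆ FR p := by
  intro v hv
  rw [mem_FR] at hv ⊢
  intro f hf
  exact hv f (makerMove_M_subset p e hf)

lemma GP_makerMove (p : MBPos n) (hGP : GP p) (e) : GP (makerMove p e) := by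
  rcases makerMove_cases p e with h | ⟨hb, hm, hbc, h⟩
  · rw [h]; exact hGP
  · rw [h]
    obtain ⟨h1, h2, h3⟩ := hGP
    refine ⟨?_, h2, ?_⟩
    · intro f hf
      rcases Finset.mem_insert.1 hf with rfl | hf
      · exact hb
      · exact h1 hf
    · rw [Finset.disjoint_left]
      intro f hf hfb
      rcases Finset.mem_insert.1 hf with rfl | hf
      · exact hbc hfb
      · exact Finset.disjoint_left.1 h3 hf hfb

lemma GP_breakerMove (p : MBPos n) (hGP : GP p) (S : Finset (Sym2 (Fin n)))
    (hS : S ⊆ board n) (hSM : ∀ e ∈ S, e ∉ p.M) : GP (breakerMove p S) := by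
  obtain ⟨h1, h2, h3⟩ := hGP
  refine ⟨h1, ?_, ?_⟩
  · exact Finset.union_subset h2 hS
  · rw [Finset.disjoint_left]
    intro f hf hfb
    rcases Finset.mem_union.1 hfb with h | h
    · exact Finset.disjoint_left.1 h3 hf h
    · exact hSM f h hf

/-- Breaker degree after a breaker move -/
lemma bdeg_breakerMove (p : MBPos n) (S : Finset (Sym2 (Fin n))) (hd : Disjoint p.B S) (v) :
    bdeg (breakerMove p S) v = bdeg p v + degIn S v := by
  simp only [bdeg, degIn, breakerMove_B, Finset.filter_union]
  exact Finset.card_union_of_disjoint (Finset.disjoint_filter_filter hd)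

lemma bdeg_makerMove (p : MBPos n) (e) (v) : bdeg (makerMove p e) v = bdeg p v := by
  simp only [bdeg, degIn, makerMove_B]

/-- unclaimed edges only shrink -/
lemma unclAt_breakerMove_subset (p : MBPos n) (S) (v) :
    unclAt (breakerMove p S) v ⊆ unclAt p v := by
  intro e he
  rw [mem_unclAt] at he ⊢
  refine ⟨he.1, he.2.1, he.2.2.1, fun hb => he.2.2.2 (Finset.mem_union_left _ hb)⟩

lemma unclAt_makerMove_subset (p : MBPos n) (e') (v) :
    unclAt (makerMove p e') v ⊆ unclAt p v := by
  intro e he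
  rw [mem_unclAt] at he ⊢
  exact ⟨he.1, he.2.1, fun hm => he.2.2.1 (makerMove_M_subset p e' hm),
    by rw [← makerMove_B p e']; exact he.2.2.2⟩

/-- a vertex all of whose board edges are claimed, and fresh: the "surrounded" winning config -/
def Surrounded (p : MBPos n) (v : Fin n) : Prop :=
  v ∈ FR p ∧ unclAt p v = ∅

lemma Surrounded_breakerMove {p : MBPos n} {v} (h : Surrounded p v) (S) :
    Surrounded (breakerMove p S) v := by
  refine ⟨by rw [FR_breakerMove]; exact h.1, ?_⟩
  have := unclAt_breakerMove_subset p S v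
  rw [h.2] at this
  exact Finset.subset_empty.1 this

lemma Surrounded_makerMove {p : MBPos n} {v} (h : Surrounded p v) (e) :
    Surrounded (makerMove p e) v := by
  rcases makerMove_cases p e with hc | ⟨hb, hm, hbc, hc⟩
  · rw [hc]; exact h
  · constructor
    · rw [mem_FR]
      intro f hf hvf
      rw [hc] at hf
      rcases Finset.mem_insert.1 hf with rfl | hf
      · -- v ∈ e, e unclaimed, contradicts surrounded (e would be in unclAt p v)
        have : f ∈ unclAt p v := mem_unclAt.2 ⟨hb, hvf, hm, hbc⟩
        rw [h.2] at this
        exact absurd this (Finset.notMem_empty _)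
      · exact mem_FR.1 h.1 f hf hvf
    · have := unclAt_makerMove_subset p e v
      rw [h.2] at this
      exact Finset.subset_empty.1 this

/-- if some vertex is in no Maker edge and `2 ≤ n`, Maker's graph is not connected -/
lemma not_connWin_of_fresh (hn : 2 ≤ n) (M : Finset (Sym2 (Fin n))) (v : Fin n)
    (hv : ∀ e ∈ M, v ∉ e) : ¬ ConnWin M := by
  intro hconn
  -- pick w ≠ v
  obtain ⟨w, hw⟩ : ∃ w : Fin n, w ≠ v := by
    refine ⟨⟨(v.val + 1) % n, Nat.mod_lt _ (by omega)⟩, ?_⟩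
    intro h
    have := congrArg Fin.val h
    simp only at this
    rcases Nat.lt_or_ge (v.val + 1) n with h1 | h1
    · rw [Nat.mod_eq_of_lt h1] at this; omega
    · have hv1 : v.val < n := v.isLt
      have : (v.val + 1) % n = 0 := by
        have : v.val + 1 = n := by omega
        simp [this]
      omega
  have hreach := hconn.preconnected w v
  obtain ⟨walk⟩ := hreach
  -- walk from w to v ; v has no incident edges, contradiction with last step
  have key : ∀ (u u' : Fin n) (_ : (SimpleGraph.fromEdgeSet (M : Set (Sym2 (Fin n)))).Walk u u'),
      (∀ e ∈ M, u' ∉ e) → u ≠ u' → False := by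
    intro u u' q
    induction q with
    | nil => intro _ h; exact h rfl
    | cons h q ih =>
      rename_i a b c
      intro hv' hne
      by_cases hbv : b = c
      · subst hbv
        rw [SimpleGraph.fromEdgeSet_adj] at h
        exact hv' _ h.1 (Sym2.mem_mk_right _ _)
      · exact ih hv' hbv
  exact key w v walk hv hw

end SBC
namespace SBC
open scoped Classical
variable {n : ℕ}

/-! ### the Breaker strategy -/

/-- fresh vertices that are one Breaker move from being surrounded -/
def Hset (m : ℕ) (p : MBPos n) : Finset (Fin n) :=
  (FR p).filter (fun v => (unclAt p v).card ≤ 3 * m)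

/-- dead vertices usable as pour centers (never were centers) -/
def usableDead (m : ℕ) (p : MBPos n) : Finset (Fin n) :=
  Finset.univ.filter (fun d => d ∉ FR p ∧ bdeg p d < 3 * m)

/-- fresh vertices eligible as pour targets -/
def elig (m : ℕ) (p : MBPos n) : Finset (Fin n) :=
  (FR p).filter (fun v => bdeg p v < 2 * m)

/-- some `j` elements of a finite set -/
def pick (S : Finset (Fin n)) (j : ℕ) : Finset (Fin n) :=
  ((S.sort (· ≤ ·)).take j).toFinset

lemma pick_subset (S : Finset (Fin n)) (j : ℕ) : pick S j ⊆ S := by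
  intro v hv
  rw [pick, List.mem_toFinset] at hv
  have := List.mem_of_mem_take hv
  rwa [Finset.mem_sort] at this

lemma card_pick (S : Finset (Fin n)) (j : ℕ) : (pick S j).card = min j S.card := by
  rw [pick, List.toFinset_card_of_nodup, List.length_take, Finset.length_sort]
  exact (S.sort_nodup (· ≤ ·)).sublist (List.take_sublist _ _)

/-- key used to select the maximum-degree fresh vertex -/
def zkey (p : MBPos n) (v : Fin n) : ℕ := bdeg p v * n + v.val

/-- set of fresh vertices of maximal key -/
def zmaxSet (p : MBPos n) (h : (FR p).Nonempty) : Finset (Fin n) :=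
  (FR p).filter (fun v => zkey p v = ((FR p).image (zkey p)).max' (h.image _))

lemma zmaxSet_nonempty (p : MBPos n) (h : (FR p).Nonempty) : (zmaxSet p h).Nonempty := by
  obtain ⟨v, hv, hEq⟩ := Finset.mem_image.1 (((FR p).image (zkey p)).max'_mem (h.image _))
  exact ⟨v, Finset.mem_filter.2 ⟨hv, hEq⟩⟩

/-- the fresh vertex of maximum Breaker degree (smallest index among ties) -/
def zmax (p : MBPos n) (h : (FR p).Nonempty) : Fin n :=
  (zmaxSet p h).min' (zmaxSet_nonempty p h)

lemma zmax_mem (p : MBPos n) (h : (FR p).Nonempty) : zmax p h ∈ FR p :=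
  (Finset.mem_filter.1 (Finset.min'_mem _ (zmaxSet_nonempty p h))).1

lemma zkey_le_zmax (p : MBPos n) (h : (FR p).Nonempty) {v : Fin n} (hv : v ∈ FR p) :
    zkey p v ≤ zkey p (zmax p h) := by
  have hzk : zkey p (zmax p h) = ((FR p).image (zkey p)).max' (h.image _) :=
    (Finset.mem_filter.1 (Finset.min'_mem _ (zmaxSet_nonempty p h))).2
  rw [hzk]
  exact Finset.le_max' _ _ (Finset.mem_image_of_mem _ hv)

lemma bdeg_le_zmax (p : MBPos n) (h : (FR p).Nonempty) {v : Fin n} (hv : v ∈ FR p) :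
    bdeg p v ≤ bdeg p (zmax p h) := by
  have := zkey_le_zmax p h hv
  unfold zkey at this
  by_contra hlt
  push_neg at hlt
  have h1 : bdeg p (zmax p h) + 1 ≤ bdeg p v := hlt
  have h2 : v.val < n := v.isLt
  have h3 : (zmax p h).val < n := (zmax p h).isLt
  nlinarith [this, h1, h2, h3]

/-- the lock claim: all unclaimed edges from `z` to fresh vertices -/
def lockSet (p : MBPos n) (z : Fin n) : Finset (Sym2 (Fin n)) :=
  (unclAt p z).filter (fun e => ∀ u ∈ e, u ∈ FR p)

def eligMin (m : ℕ) (p : MBPos n) (he : (elig m p).Nonempty) : ℕ :=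
  ((elig m p).image (bdeg p)).min' (he.image _)

def TLs (m : ℕ) (p : MBPos n) (he : (elig m p).Nonempty) : Finset (Fin n) :=
  (elig m p).filter (fun v => bdeg p v = eligMin m p he)

def THs (m : ℕ) (p : MBPos n) (he : (elig m p).Nonempty) : Finset (Fin n) :=
  (elig m p).filter (fun v => bdeg p v ≠ eligMin m p he)

def Tset (m : ℕ) (p : MBPos n) (he : (elig m p).Nonempty) : Finset (Fin n) :=
  if 3 * m ≤ (TLs m p he).card then pick (TLs m p he) (3 * m)
  else TLs m p he ∪ pick (THs m p he) (3 * m - (TLs m p he).card)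

/-- the pour claim -/
def pourSet (m : ℕ) (p : MBPos n) (d : Fin n) : Finset (Sym2 (Fin n)) :=
  if he : (elig m p).Nonempty then
    ((Tset m p he).image (fun w => s(d, w))).filter
      (fun e => e ∈ board n ∧ e ∉ p.M ∧ e ∉ p.B)
  else ∅

lemma Tset_subset (m : ℕ) (p : MBPos n) (he : (elig m p).Nonempty) :
    Tset m p he ⊆ elig m p := by
  unfold Tset
  by_cases hk : 3 * m ≤ (TLs m p he).card
  · rw [if_pos hk]
    exact (pick_subset _ _).trans (Finset.filter_subset _ _)
  · rw [if_neg hk]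
    refine Finset.union_subset (Finset.filter_subset _ _) ?_
    exact (pick_subset _ _).trans (Finset.filter_subset _ _)

lemma Tset_card_le (m : ℕ) (p : MBPos n) (he : (elig m p).Nonempty) :
    (Tset m p he).card ≤ 3 * m := by
  unfold Tset
  by_cases hk : 3 * m ≤ (TLs m p he).card
  · rw [if_pos hk, card_pick]; omega
  · rw [if_neg hk]
    refine le_trans (Finset.card_union_le _ _) ?_
    rw [card_pick]
    omega

/-- Breaker's strategy -/
def bs (m : ℕ) (p : MBPos n) : Finset (Sym2 (Fin n)) :=
  if h1 : (Hset m p).Nonempty then unclAt p ((Hset m p).min' h1)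
  else if h2 : (FR p).Nonempty ∧ (FR p).card ≤ 3 * m + 1 then lockSet p (zmax p h2.1)
  else if h3 : (usableDead m p).Nonempty then pourSet m p ((usableDead m p).min' h3)
  else ∅

/-! ### legality -/

lemma unclAt_subset_board (p : MBPos n) (v) : unclAt p v ⊆ board n :=
  fun _ he => (mem_unclAt.1 he).1

lemma bs_subset_unclAt (m : ℕ) (p : MBPos n) (hn : 0 < n) :
    ∃ v : Fin n, bs m p ⊆ unclAt p v ∨ bs m p = ∅ := by
  classical
  unfold bs
  by_cases h1 : (Hset m p).Nonempty
  · exact ⟨(Hset m p).min' h1, Or.inl (by rw [dif_pos h1])⟩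
  · rw [dif_neg h1]
    by_cases h2 : (FR p).Nonempty ∧ (FR p).card ≤ 3 * m + 1
    · refine ⟨zmax p h2.1, Or.inl ?_⟩
      rw [dif_pos h2]
      exact Finset.filter_subset _ _
    · rw [dif_neg h2]
      by_cases h3 : (usableDead m p).Nonempty
      · rw [dif_pos h3]
        unfold pourSet
        by_cases he : (elig m p).Nonempty
        · rw [dif_pos he]
          refine ⟨(usableDead m p).min' h3, Or.inl ?_⟩
          intro e hee
          simp only [Finset.mem_filter, Finset.mem_image] at hee
          obtain ⟨⟨w, _, rfl⟩, hb, hm, hbb⟩ := hee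
          exact mem_unclAt.2 ⟨hb, Sym2.mem_mk_left _ _, hm, hbb⟩
        · rw [dif_neg he]
          exact ⟨⟨0, hn⟩, Or.inr rfl⟩
      · rw [dif_neg h3]
        exact ⟨⟨0, hn⟩, Or.inr rfl⟩

end SBC
namespace SBC
open scoped Classical
variable {n : ℕ}

lemma lockSet_card (p : MBPos n) (z : Fin n) (hz : z ∈ FR p) :
    (lockSet p z).card ≤ (FR p).card - 1 := by
  classical
  have hinj : (lockSet p z).card ≤ ((FR p).erase z).card := by
    apply Finset.card_le_card_of_injOn (fun e => if h : z ∈ e then Sym2.Mem.other' h else z)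
    · intro e he
      have h1 : e ∈ unclAt p z := (Finset.mem_filter.1 he).1
      have hall : ∀ u ∈ e, u ∈ FR p := (Finset.mem_filter.1 he).2
      have hze : z ∈ e := (mem_unclAt.1 h1).2.1
      have hnd : ¬ e.IsDiag := mem_board_iff.1 (mem_unclAt.1 h1).1
      simp only [dif_pos hze]
      refine Finset.mem_erase.2 ⟨?_, hall _ (Sym2.other_mem' hze)⟩
      intro hEq
      apply hnd
      have := Sym2.other_spec' hze
      rw [← this, hEq]
      exact Sym2.mk_isDiag_iff.2 rfl
    · intro e1 h1 e2 h2 hEq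
      have hz1 : z ∈ e1 := (mem_unclAt.1 (Finset.mem_filter.1 h1).1).2.1
      have hz2 : z ∈ e2 := (mem_unclAt.1 (Finset.mem_filter.1 h2).1).2.1
      simp only [dif_pos hz1, dif_pos hz2] at hEq
      rw [← Sym2.other_spec' hz1, ← Sym2.other_spec' hz2, hEq]
  calc (lockSet p z).card ≤ ((FR p).erase z).card := hinj
    _ = (FR p).card - 1 := Finset.card_erase_of_mem hz

lemma bs_card (m : ℕ) (p : MBPos n) : (bs m p).card ≤ 3 * m := by
  classical
  unfold bs
  by_cases h1 : (Hset m p).Nonempty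
  · rw [dif_pos h1]
    have := Finset.min'_mem _ h1
    exact (Finset.mem_filter.1 this).2
  · rw [dif_neg h1]
    by_cases h2 : (FR p).Nonempty ∧ (FR p).card ≤ 3 * m + 1
    · rw [dif_pos h2]
      have := lockSet_card p (zmax p h2.1) (zmax_mem p h2.1)
      omega
    · rw [dif_neg h2]
      by_cases h3 : (usableDead m p).Nonempty
      · rw [dif_pos h3]
        unfold pourSet
        by_cases he : (elig m p).Nonempty
        · rw [dif_pos he]
          exact le_trans (Finset.card_filter_le _ _)
            (le_trans Finset.card_image_le (Tset_card_le m p he))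
        · rw [dif_neg he]; simp
      · rw [dif_neg h3]; simp

lemma bs_legal (m b : ℕ) (hb : 3 * m ≤ b) (hn : 0 < n) :
    LegalBreaker (n := n) (StarBias b) (bs m) := by
  intro p
  obtain ⟨v, hv | hv⟩ := bs_subset_unclAt m p hn
  · refine ⟨fun e he => (mem_unclAt.1 (hv he)).1,
      fun e he => ⟨(mem_unclAt.1 (hv he)).2.2.1, (mem_unclAt.1 (hv he)).2.2.2⟩,
      le_trans (bs_card m p) hb, v, fun e he => (mem_unclAt.1 (hv he)).2.1⟩
  · rw [hv]
    exact ⟨Finset.empty_subset _, by simp, by simp, ⟨0, hn⟩, by simp⟩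

end SBC
namespace SBC
open scoped Classical
variable {n : ℕ}

/-! ### more effect lemmas -/

lemma FR_makerMove_eff {p : MBPos n} {e : Sym2 (Fin n)}
    (h : makerMove p e = ⟨insert e p.M, p.B⟩) (v : Fin n) :
    v ∈ FR (makerMove p e) ↔ v ∈ FR p ∧ v ∉ e := by
  rw [h]
  simp only [mem_FR]
  constructor
  · intro hv
    exact ⟨fun f hf => hv f (by simp [hf]), hv e (by simp)⟩
  · rintro ⟨hv, hve⟩ f hf
    rcases Finset.mem_insert.1 hf with rfl | hf
    · exact hve
    · exact hv f hf

lemma unclAt_makerMove_eff {p : MBPos n} {e : Sym2 (Fin n)}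
    (h : makerMove p e = ⟨insert e p.M, p.B⟩) (v : Fin n) :
    unclAt (makerMove p e) v = (unclAt p v).erase e := by
  rw [h]
  ext f
  simp only [mem_unclAt, Finset.mem_erase, Finset.mem_insert]
  constructor
  · rintro ⟨hb, hv, hm, hbb⟩
    exact ⟨fun hfe => hm (Or.inl hfe), hb, hv, fun hm' => hm (Or.inr hm'), hbb⟩
  · rintro ⟨hne, hb, hv, hm, hbb⟩
    exact ⟨hb, hv, fun hh => hh.elim hne hm, hbb⟩

lemma unclAt_makerMove_not_mem {p : MBPos n} {e : Sym2 (Fin n)} {v : Fin n} (hv : v ∉ e) :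
    unclAt (makerMove p e) v = unclAt p v := by
  rcases makerMove_cases p e with h | ⟨_, _, _, h⟩
  · rw [h]
  · rw [unclAt_makerMove_eff h]
    apply Finset.erase_eq_of_notMem
    intro hc
    exact hv (mem_unclAt.1 hc).2.1

lemma unclAt_breakerMove (p : MBPos n) (S) (v) :
    unclAt (breakerMove p S) v = (unclAt p v) \ S := by
  ext f
  simp only [mem_unclAt, Finset.mem_sdiff, breakerMove]
  constructor
  · rintro ⟨hb, hv, hm, hbb⟩
    exact ⟨⟨hb, hv, hm, fun h => hbb (Finset.mem_union_left _ h)⟩,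
      fun h => hbb (Finset.mem_union_right _ h)⟩
  · rintro ⟨⟨hb, hv, hm, hbb⟩, hs⟩
    exact ⟨hb, hv, hm, fun h => (Finset.mem_union.1 h).elim hbb hs⟩

lemma mem_FR_of_not_mem_of_mem {p : MBPos n} {e : Sym2 (Fin n)} {v : Fin n}
    (hv : v ∈ FR p) (hve : v ∉ e) : v ∈ FR (makerMove p e) := by
  rcases makerMove_cases p e with h | h
  · rw [h]; exact hv
  · rw [FR_makerMove_eff h.2.2.2]
    exact ⟨hv, hve⟩

/-! ### Cset, lam, MASS -/

/-- fresh vertices still far from surrounded -/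
def Cset (m : ℕ) (p : MBPos n) : Finset (Fin n) :=
  (FR p).filter (fun v => 3 * m < (unclAt p v).card)

def xC (m : ℕ) (p : MBPos n) : ℕ := (Cset m p).card

def MASS (m : ℕ) (p : MBPos n) : ℕ := ∑ v ∈ Cset m p, bdeg p v

def lam (m : ℕ) (p : MBPos n) : ℕ :=
  if h : (Cset m p).Nonempty then ((Cset m p).image (bdeg p)).min' (h.image _) else 0

def twoval (m : ℕ) (p : MBPos n) : Prop :=
  ∀ v ∈ Cset m p, bdeg p v = lam m p ∨ bdeg p v = lam m p + 1

lemma FR_eq_union (m : ℕ) (p : MBPos n) : FR p = Cset m p ∪ Hset m p := by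
  ext v
  simp only [Cset, Hset, Finset.mem_union, Finset.mem_filter]
  constructor
  · intro hv
    by_cases h : 3 * m < (unclAt p v).card
    · exact Or.inl ⟨hv, h⟩
    · exact Or.inr ⟨hv, by omega⟩
  · rintro (⟨hv, _⟩ | ⟨hv, _⟩) <;> exact hv

lemma FR_eq_Cset_of_Hempty {m : ℕ} {p : MBPos n} (h : Hset m p = ∅) : FR p = Cset m p := by
  rw [FR_eq_union m p, h, Finset.union_empty]

lemma lam_le_bdeg {m : ℕ} {p : MBPos n} {v : Fin n} (hv : v ∈ Cset m p) :
    lam m p ≤ bdeg p v := by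
  rw [lam, dif_pos ⟨v, hv⟩]
  exact Finset.min'_le _ _ (Finset.mem_image_of_mem _ hv)

lemma lam_attained {m : ℕ} {p : MBPos n} (h : (Cset m p).Nonempty) :
    ∃ v ∈ Cset m p, bdeg p v = lam m p := by
  rw [lam, dif_pos h]
  obtain ⟨v, hv, hEq⟩ := Finset.mem_image.1 (Finset.min'_mem ((Cset m p).image (bdeg p)) (h.image _))
  exact ⟨v, hv, hEq⟩

lemma lam_mul_le_MASS (m : ℕ) (p : MBPos n) : xC m p * lam m p ≤ MASS m p := by
  rw [xC, MASS, Finset.card_eq_sum_ones, Finset.sum_mul, one_mul]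
  exact Finset.sum_le_sum (fun v hv => lam_le_bdeg hv)

lemma MASS_le (m : ℕ) (p : MBPos n) (h2 : twoval m p) :
    MASS m p ≤ xC m p * (lam m p + 1) := by
  rw [xC, MASS, Finset.card_eq_sum_ones, Finset.sum_mul, one_mul]
  refine Finset.sum_le_sum (fun v hv => ?_)
  rcases h2 v hv with h | h <;> omega

/-- bound on bdeg of a C-member -/
lemma bdeg_lt_of_mem_Cset {m : ℕ} {p : MBPos n} (hGP : GP p) (hn : n = 7 * m)
    {v : Fin n} (hv : v ∈ Cset m p) : bdeg p v < 4 * m - 1 := by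
  have h1 := unclAt_card_fresh p hGP (Finset.mem_filter.1 hv).1
  have h2 := (Finset.mem_filter.1 hv).2
  omega

lemma lam_lt_of_nonempty {m : ℕ} {p : MBPos n} (hGP : GP p) (hn : n = 7 * m)
    (h : (Cset m p).Nonempty) : lam m p < 4 * m - 1 := by
  obtain ⟨v, hv, hEq⟩ := lam_attained h
  rw [← hEq]
  exact bdeg_lt_of_mem_Cset hGP hn hv

end SBC
namespace SBC

/-! ### the rational threshold function -/

noncomputable def lamQ (m : ℕ) (x : ℚ) : ℚ :=
  max (max (max ((147:ℚ)/100 * m - 21/100 * x) ((861:ℚ)/500 * m - 147/580 * x))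
           (max ((7161:ℚ)/3625 * m - 49/160 * x) ((64393:ℚ)/29000 * m - 147/400 * x)))
      ((5663:ℚ)/2320 * m - 147/340 * x)

lemma lamQ_ge_p5 (m : ℕ) (x : ℚ) : (5663:ℚ)/2320 * m - 147/340 * x ≤ lamQ m x :=
  le_max_right _ _

lemma lamQ_start (m : ℕ) : lamQ m (7 * m) ≤ 0 := by
  have hm : (0:ℚ) ≤ (m:ℚ) := Nat.cast_nonneg m
  unfold lamQ
  refine max_le (max_le (max_le (by nlinarith) (by nlinarith)) (max_le (by nlinarith) (by nlinarith))) (by nlinarith)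

/-- monotone: lamQ is nonincreasing in x -/
lemma lamQ_mono (m : ℕ) {x y : ℚ} (h : y ≤ x) : lamQ m x ≤ lamQ m y := by
  unfold lamQ
  have h1 : (21:ℚ)/100 * x ≥ 21/100 * y := by nlinarith
  have h2 : (147:ℚ)/580 * x ≥ 147/580 * y := by nlinarith
  have h3 : (49:ℚ)/160 * x ≥ 49/160 * y := by nlinarith
  have h4 : (147:ℚ)/400 * x ≥ 147/400 * y := by nlinarith
  have h5 : (147:ℚ)/340 * x ≥ 147/340 * y := by nlinarith
  refine max_le (max_le (max_le ?_ ?_) (max_le ?_ ?_)) ?_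
  · exact le_trans (by linarith) (le_max_left _ _ |>.trans (le_max_left _ _ |>.trans (le_max_left _ _)))
  · exact le_trans (by linarith) ((le_max_right _ _).trans ((le_max_left _ _).trans (le_max_left _ _)))
  · exact le_trans (by linarith) (((le_max_left _ _).trans (le_max_right _ _)).trans (le_max_left _ _))
  · exact le_trans (by linarith) (((le_max_right _ _).trans (le_max_right _ _)).trans (le_max_left _ _))
  · exact le_trans (by linarith) (le_max_right _ _)

/-- at the active piece, `s * y ≤ 147/100 * m` -/
lemma lamQ_active (m : ℕ) (y : ℚ) (hy0 : 0 ≤ y) (hy7 : y ≤ 7 * m) :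
    ∃ a s : ℚ, lamQ m y = a * m - s * y ∧ (∀ x : ℚ, a * m - s * x ≤ lamQ m x) ∧
      0 ≤ s ∧ s * y ≤ 147/100 * m := by
  have hm : (0:ℚ) ≤ (m:ℚ) := Nat.cast_nonneg m
  set P1 := (147:ℚ)/100 * m - 21/100 * y with hP1
  set P2 := (861:ℚ)/500 * m - 147/580 * y with hP2
  set P3 := (7161:ℚ)/3625 * m - 49/160 * y with hP3
  set P4 := (64393:ℚ)/29000 * m - 147/400 * y with hP4
  set P5 := (5663:ℚ)/2320 * m - 147/340 * y with hP5
  have hQ : lamQ m y = max (max (max P1 P2) (max P3 P4)) P5 := rfl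
  rcases le_or_gt (max (max P1 P2) (max P3 P4)) P5 with h5 | h5
  · -- piece 5 active:  P5 ≥ P4 gives y ≤ 17/5 m
    refine ⟨5663/2320, 147/340, by rw [hQ, max_eq_right h5], fun x => lamQ_ge_p5 m x, by norm_num, ?_⟩
    have h54 : P4 ≤ P5 := le_trans (le_max_right _ _ |>.trans (le_max_right _ _)) h5
    rw [hP4, hP5] at h54
    nlinarith
  · rw [hQ, max_eq_left h5.le]
    rcases le_or_gt (max P1 P2) (max P3 P4) with h34 | h34
    · rw [max_eq_right h34]
      rcases le_or_gt P3 P4 with h4 | h4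
      · -- piece 4 : P4 ≥ P3 gives y ≤ 4 m
        refine ⟨64393/29000, 147/400, by rw [max_eq_right h4], ?_, by norm_num, ?_⟩
        · intro x
          exact le_trans (le_max_right _ _ |>.trans (le_max_right _ _)) (le_max_left _ _)
        · rw [hP3, hP4] at h4
          nlinarith
      · -- piece 3 : P3 ≥ P2 gives y ≤ 24/5 m
        have h32 : P2 ≤ P3 := by
          have hh : P2 ≤ max P3 P4 := le_trans (le_max_right _ _) h34
          rwa [max_eq_left h4.le] at hh
        refine ⟨7161/3625, 49/160, by rw [max_eq_left h4.le], ?_, by norm_num, ?_⟩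
        · intro x
          exact le_trans (le_max_left _ _ |>.trans (le_max_right _ _)) (le_max_left _ _)
        · rw [hP2, hP3] at h32
          nlinarith
    · rw [max_eq_left h34.le]
      rcases le_or_gt P1 P2 with h2 | h2
      · -- piece 2 : P2 ≥ P1 gives y ≤ 29/5 m
        refine ⟨861/500, 147/580, by rw [max_eq_right h2], ?_, by norm_num, ?_⟩
        · intro x
          exact le_trans (le_max_right _ _ |>.trans (le_max_left _ _)) (le_max_left _ _)
        · rw [hP1, hP2] at h2
          nlinarith
      · -- piece 1 : y ≤ 7 m
        refine ⟨147/100, 21/100, by rw [max_eq_left h2.le], ?_, by norm_num, ?_⟩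
        · intro x
          exact le_trans (le_max_left _ _ |>.trans (le_max_left _ _)) (le_max_left _ _)
        · nlinarith

lemma lamQ_step (m : ℕ) (hm : 100 ≤ m) {x y : ℚ} (h3 : 0 ≤ y) (hyx : y ≤ x)
    (h7 : x ≤ 7 * m) (hd : x - y ≤ 2) :
    y * (lamQ m y - lamQ m x) ≤ 3 * m - (x - y) := by
  have hm' : (100:ℚ) ≤ (m:ℚ) := by exact_mod_cast hm
  obtain ⟨a, s, hEq, hLB, hs0, hsy⟩ := lamQ_active m y h3 (le_trans hyx h7)
  have h1 : lamQ m y - lamQ m x ≤ s * (x - y) := by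
    have := hLB x
    nlinarith
  have h2 : y * (lamQ m y - lamQ m x) ≤ (s * y) * (x - y) := by
    rcases le_or_gt (lamQ m y - lamQ m x) 0 with hneg | hpos
    · nlinarith
    · nlinarith
  have h3' : (s * y) * (x - y) ≤ (147/100 * m) * (x - y) := by nlinarith
  nlinarith

lemma lamQ_entry (m : ℕ) (hm : 100 ≤ m) {x : ℚ} (h3 : 3 * m ≤ x) :
    4 * m + 3 ≤ x + lamQ m x := by
  have hm' : (100:ℚ) ≤ (m:ℚ) := by exact_mod_cast hm
  have h5 := lamQ_ge_p5 m x
  nlinarith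

/-- combined mass step inequality -/
lemma mass_step (m : ℕ) (hm : 100 ≤ m) {x δ lm Ms : ℚ}
    (hx3 : 0 ≤ x - δ) (hx7 : x ≤ 7 * m) (hδ0 : 0 ≤ δ) (hδ2 : δ ≤ 2)
    (hlam : x * lm ≤ Ms) (hM : x * lamQ m x ≤ Ms) (hx0 : 0 < x) :
    (x - δ) * lamQ m (x - δ) ≤ Ms - δ * (lm + 1) + 3 * m := by
  have hm' : (100:ℚ) ≤ (m:ℚ) := by exact_mod_cast hm
  have key := lamQ_step m hm (x := x) (y := x - δ) (by linarith) (by linarith) hx7 (by linarith)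
  -- (x-δ)(lamQ(x-δ) - lamQ(x)) ≤ 3m - δ
  have h1 : (x - δ) * lamQ m (x - δ) ≤ (x - δ) * lamQ m x + (3 * m - δ) := by nlinarith
  -- (x-δ) * x * lamQ(x) ≤ (x-δ) * Ms ≤ x*Ms - δ*(x*lm)
  have h2 : (x - δ) * (x * lamQ m x) ≤ x * Ms - δ * (x * lm) := by nlinarith
  -- divide by x
  have h3 : (x - δ) * lamQ m x ≤ Ms - δ * lm := by
    rw [← mul_le_mul_iff_right₀ hx0]
    calc x * ((x - δ) * lamQ m x) = (x - δ) * (x * lamQ m x) := by ring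
      _ ≤ x * Ms - δ * (x * lm) := h2
      _ = x * (Ms - δ * lm) := by ring
  linarith

end SBC
namespace SBC
open scoped Classical
variable {n : ℕ}

/-! ### invariant modes -/

def N9p (p : MBPos n) : Prop := ∀ e ∈ p.B, ∃ u ∈ e, u ∉ FR p

def N5s (m : ℕ) (p : MBPos n) : Prop := ∀ e ∈ p.B, ∃ u ∈ e, u ∉ FR p ∧ 3 * m ≤ bdeg p u

def WONp (p : MBPos n) : Prop := ∃ v, Surrounded p v

def ModeP (m : ℕ) (p : MBPos n) : Prop :=
  Hset m p = ∅ ∧ 3 * m + 2 ≤ xC m p ∧ N9p p ∧ twoval m p ∧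
    ((lam m p < 2 * m ∧ N5s m p ∧ ((xC m p : ℚ) * lamQ m (xC m p) ≤ (MASS m p : ℚ)))
      ∨ 2 * m ≤ lam m p)

def ModeL (m : ℕ) (p : MBPos n) : Prop :=
  ∃ z, Hset m p = {z} ∧
    (∀ w ∈ FR p, w ≠ z → (s(z, w) ∈ p.M ∨ s(z, w) ∈ p.B)) ∧
    (∀ e ∈ p.B, ∃ u ∈ e, u ∉ FR p ∨ u = z) ∧
    twoval m p ∧ (Cset m p).Nonempty ∧ 4 * m ≤ lam m p + xC m p ∧ xC m p ≤ 3 * m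

def ModeLW (m : ℕ) (p : MBPos n) : Prop :=
  ∃ z₁ z₂ : Fin n, z₁ ≠ z₂ ∧ z₁ ∈ Hset m p ∧ z₂ ∈ Hset m p ∧
    (s(z₁, z₂) ∈ p.M ∨ s(z₁, z₂) ∈ p.B)

def Inv (m : ℕ) (p : MBPos n) : Prop :=
  GP p ∧ (WONp p ∨ ModeLW m p ∨ ModeL m p ∨ ModeP m p)

def round (m : ℕ) (p : MBPos n) (e : Sym2 (Fin n)) : MBPos n :=
  breakerMove (makerMove p e) (bs m (makerMove p e))

/-! ### easy step lemmas -/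

lemma WONp_round (m : ℕ) (p : MBPos n) (e : Sym2 (Fin n)) (h : WONp p) :
    WONp (round m p e) := by
  obtain ⟨v, hv⟩ := h
  exact ⟨v, Surrounded_breakerMove (Surrounded_makerMove hv e) _⟩

lemma Hset_subset_FR (m : ℕ) (p : MBPos n) : Hset m p ⊆ FR p := Finset.filter_subset _ _

/-- if some hot vertex exists, Breaker's next move surrounds one -/
lemma finish_step (m : ℕ) (q : MBPos n) (h1 : (Hset m q).Nonempty) :
    WONp (breakerMove q (bs m q)) := by
  have hbs : bs m q = unclAt q ((Hset m q).min' h1) := by rw [bs, dif_pos h1]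
  set v := (Hset m q).min' h1 with hv
  refine ⟨v, ?_, ?_⟩
  · rw [FR_breakerMove]
    exact Hset_subset_FR m q (Finset.min'_mem _ h1)
  · rw [unclAt_breakerMove, hbs, Finset.sdiff_self]

/-- an edge containing two distinct given vertices is the edge between them -/
lemma eq_of_two_mem {e : Sym2 (Fin n)} {a b : Fin n} (hab : a ≠ b)
    (ha : a ∈ e) (hb : b ∈ e) : e = s(a, b) := by
  induction e with
  | _ x y =>
    rw [Sym2.mem_iff] at ha hb
    rcases ha with rfl | rfl <;> rcases hb with rfl | rfl
    · exact absurd rfl hab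
    · rfl
    · exact Sym2.eq_swap
    · exact absurd rfl hab

/-- a vertex that is hot and not touched by Maker's move stays hot -/
lemma hot_survives {m : ℕ} {p : MBPos n} {z : Fin n} (hz : z ∈ Hset m p)
    {e : Sym2 (Fin n)} (hze : z ∉ e) : z ∈ Hset m (makerMove p e) := by
  have hzf : z ∈ FR (makerMove p e) := mem_FR_of_not_mem_of_mem (Hset_subset_FR m p hz) hze
  refine Finset.mem_filter.2 ⟨hzf, ?_⟩
  calc (unclAt (makerMove p e) z).card ≤ (unclAt p z).card :=
        Finset.card_le_card (unclAt_makerMove_subset p e z)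
    _ ≤ 3 * m := (Finset.mem_filter.1 hz).2

lemma ModeLW_round (m : ℕ) (p : MBPos n) (e : Sym2 (Fin n)) (h : ModeLW m p) :
    WONp (round m p e) := by
  obtain ⟨z₁, z₂, hne, h1, h2, hcl⟩ := h
  -- some zi not in (effective) e survives as hot
  have hsurv : (Hset m (makerMove p e)).Nonempty := by
    rcases makerMove_cases p e with hc | ⟨hb, hm', hbb, hc⟩
    · rw [hc]; exact ⟨z₁, h1⟩
    · by_cases hz1 : z₁ ∈ e
      · by_cases hz2 : z₂ ∈ e
        · exfalso
          have := eq_of_two_mem hne hz1 hz2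
          rw [this] at hm' hbb
          rcases hcl with h | h
          · exact hm' h
          · exact hbb h
        · exact ⟨z₂, hot_survives h2 hz2⟩
      · exact ⟨z₁, hot_survives h1 hz1⟩
  exact finish_step m _ hsurv

end SBC
namespace SBC
open scoped Classical
variable {n : ℕ}

/-- degree effect of claiming a star from `z` to a set `D` not containing `z` -/
lemma degIn_star (z : Fin n) (D : Finset (Fin n)) (hzD : z ∉ D) (v : Fin n) :
    degIn (D.image (fun w => s(z, w))) v =
      if v = z then D.card else (if v ∈ D then 1 else 0) := by
  classical
  have hinj : Set.InjOn (fun w => s(z, w)) D := by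
    intro w1 _ w2 _ h
    exact Sym2.congr_right.1 h
  by_cases hvz : v = z
  · subst hvz
    rw [if_pos rfl]
    have : (D.image (fun w => s(v, w))).filter (fun e => v ∈ e) = D.image (fun w => s(v, w)) := by
      refine Finset.filter_eq_self.2 ?_
      intro e he
      obtain ⟨w, _, rfl⟩ := Finset.mem_image.1 he
      exact Sym2.mem_mk_left _ _
    rw [degIn, this, Finset.card_image_of_injOn hinj]
  · rw [if_neg hvz]
    by_cases hvD : v ∈ D
    · rw [if_pos hvD]
      have : (D.image (fun w => s(z, w))).filter (fun e => v ∈ e) = {s(z, v)} := by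
        ext e
        simp only [Finset.mem_filter, Finset.mem_image, Finset.mem_singleton]
        constructor
        · rintro ⟨⟨w, hw, rfl⟩, hv⟩
          rcases Sym2.mem_iff.1 hv with h | h
          · exact absurd h hvz
          · subst h; rfl
        · rintro rfl
          exact ⟨⟨v, hvD, rfl⟩, Sym2.mem_mk_right _ _⟩
      rw [degIn, this, Finset.card_singleton]
    · rw [if_neg hvD]
      have : (D.image (fun w => s(z, w))).filter (fun e => v ∈ e) = ∅ := by
        refine Finset.filter_eq_empty_iff.2 ?_
        intro e he
        obtain ⟨w, hw, rfl⟩ := Finset.mem_image.1 he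
        intro hv
        rcases Sym2.mem_iff.1 hv with h | h
        · exact hvz h
        · exact hvD (h ▸ hw)
      rw [degIn, this, Finset.card_empty]
  
/-- a fresh vertex is in no Maker edge, hence `s(z,w)` with `z` fresh is not in `p.M` -/
lemma star_not_mem_M {p : MBPos n} {z : Fin n} (hz : z ∈ FR p) (w : Fin n) :
    s(z, w) ∉ p.M := fun h => mem_FR.1 hz _ h (Sym2.mem_mk_left _ _)

/-- under N9, edges between two fresh vertices are not Breaker's -/
lemma star_not_mem_B {p : MBPos n} (hN9 : N9p p) {z w : Fin n}
    (hz : z ∈ FR p) (hw : w ∈ FR p) : s(z, w) ∉ p.B := by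
  intro h
  obtain ⟨u, hu, hdead⟩ := hN9 _ h
  rcases Sym2.mem_iff.1 hu with rfl | rfl
  · exact hdead hz
  · exact hdead hw

lemma twoval_of_pair {m : ℕ} {p : MBPos n} (A : ℕ)
    (h : ∀ v ∈ Cset m p, bdeg p v = A ∨ bdeg p v = A + 1) (hne : (Cset m p).Nonempty) :
    twoval m p ∧ A ≤ lam m p := by
  obtain ⟨v₀, hv₀, hEq⟩ := lam_attained hne
  have hA : A ≤ lam m p := by
    rcases h v₀ hv₀ with h' | h' <;> omega
  refine ⟨?_, hA⟩
  intro v hv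
  have h1 := lam_le_bdeg hv
  rcases h v hv with h' | h' <;> omega

end SBC
namespace SBC
open scoped Classical
variable {n : ℕ}

lemma lock_step (m : ℕ) (hm : 100 ≤ m) (hn : n = 7 * m) (q : MBPos n)
    (hGP : GP q) (hH : Hset m q = ∅) (hne : (Cset m q).Nonempty)
    (hx : xC m q ≤ 3 * m + 1) (hsum : 4 * m ≤ lam m q + xC m q)
    (htv : twoval m q) (hN9 : N9p q) :
    WONp (breakerMove q (bs m q)) ∨ ModeLW m (breakerMove q (bs m q)) ∨
      ModeL m (breakerMove q (bs m q)) := by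
  have hFR : FR q = Cset m q := FR_eq_Cset_of_Hempty hH
  have hFRne : (FR q).Nonempty := by rw [hFR]; exact hne
  have hbs : bs m q = lockSet q (zmax q hFRne) := by
    rw [bs, dif_neg (by rw [hH]; exact Finset.not_nonempty_empty), dif_pos]
    exact ⟨hFRne, by rw [hFR]; exact hx⟩
  set z := zmax q hFRne with hzdef
  have hz : z ∈ FR q := zmax_mem q hFRne
  have hzC : z ∈ Cset m q := by rw [← hFR]; exact hz
  -- the claimed set is the star from z to the other C vertices
  have hS : lockSet q z = ((Cset m q).erase z).image (fun w => s(z, w)) := by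
    ext e
    constructor
    · intro he
      have h1 : e ∈ unclAt q z := (Finset.mem_filter.1 he).1
      have hall : ∀ u ∈ e, u ∈ FR q := (Finset.mem_filter.1 he).2
      obtain ⟨hb, hze, hmm, hbb⟩ := mem_unclAt.1 h1
      have hnd : ¬ e.IsDiag := mem_board_iff.1 hb
      have hspec := Sym2.other_spec' hze
      set w := Sym2.Mem.other' hze with hwdef
      have hwz : w ≠ z := by
        intro hEq
        apply hnd
        rw [← hspec, hEq]
        exact Sym2.mk_isDiag_iff.2 rfl
      have hwF : w ∈ FR q := hall w (Sym2.other_mem' hze)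
      refine Finset.mem_image.2 ⟨w, Finset.mem_erase.2 ⟨hwz, by rw [← hFR]; exact hwF⟩, hspec⟩
    · intro he
      obtain ⟨w, hw, rfl⟩ := Finset.mem_image.1 he
      have hwz : w ≠ z := (Finset.mem_erase.1 hw).1
      have hwF : w ∈ FR q := by rw [hFR]; exact (Finset.mem_erase.1 hw).2
      refine Finset.mem_filter.2 ⟨mem_unclAt.2 ⟨mk_mem_board (fun h => hwz h.symm),
        Sym2.mem_mk_left _ _, star_not_mem_M hz w, star_not_mem_B hN9 hz hwF⟩, ?_⟩
      intro u hu
      rcases Sym2.mem_iff.1 hu with rfl | rfl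
      · exact hz
      · exact hwF
  have hinj : Set.InjOn (fun w => s(z, w)) ((Cset m q).erase z) := by
    intro w1 _ w2 _ h
    exact Sym2.congr_right.1 h
  have hzerase : z ∉ (Cset m q).erase z := Finset.notMem_erase _ _
  have hcard : (lockSet q z).card = xC m q - 1 := by
    rw [hS, Finset.card_image_of_injOn hinj, Finset.card_erase_of_mem hzC]; rfl
  have hdisj : Disjoint q.B (lockSet q z) := by
    rw [Finset.disjoint_right]
    intro e he
    exact (mem_unclAt.1 (Finset.mem_filter.1 he).1).2.2.2
  rw [hbs]
  set p'' := breakerMove q (lockSet q z) with hp''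
  have hFR'' : FR p'' = FR q := FR_breakerMove q _
  have hdeg : ∀ v, bdeg p'' v = bdeg q v + degIn (lockSet q z) v :=
    bdeg_breakerMove q _ hdisj
  have hdegS : ∀ v, degIn (lockSet q z) v =
      if v = z then ((Cset m q).erase z).card else (if v ∈ (Cset m q).erase z then 1 else 0) := by
    intro v
    rw [hS]
    exact degIn_star z _ hzerase v
  have huncl'' : ∀ v, unclAt p'' v = unclAt q v \ lockSet q z :=
    unclAt_breakerMove q _
  -- z is hot after the move
  have hcz : (unclAt q z).card + bdeg q z = n - 1 := unclAt_card_fresh q hGP hz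
  have hlamz : lam m q ≤ bdeg q z := lam_le_bdeg hzC
  have hlamlt : lam m q < 4 * m - 1 := lam_lt_of_nonempty hGP hn hne
  have hSsub : lockSet q z ⊆ unclAt q z := Finset.filter_subset _ _
  have hzhot : (unclAt p'' z).card ≤ 3 * m := by
    rw [huncl'', Finset.card_sdiff_of_subset hSsub, hcard]
    have hxlb : 2 ≤ xC m q := by omega
    omega
  have hzH'' : z ∈ Hset m p'' := by
    refine Finset.mem_filter.2 ⟨by rw [hFR'']; exact hz, hzhot⟩
  -- card drop for other C members
  have hdrop : ∀ w ∈ (Cset m q).erase z,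
      (unclAt p'' w).card + 1 = (unclAt q w).card := by
    intro w hw
    have hwz : w ≠ z := (Finset.mem_erase.1 hw).1
    have hwC : w ∈ Cset m q := (Finset.mem_erase.1 hw).2
    have hwF : w ∈ FR q := by rw [hFR]; exact hwC
    have hint : unclAt q w ∩ lockSet q z = {s(z, w)} := by
      ext e
      simp only [Finset.mem_inter, Finset.mem_singleton]
      constructor
      · rintro ⟨he1, he2⟩
        rw [hS] at he2
        obtain ⟨w', hw', rfl⟩ := Finset.mem_image.1 he2
        have hwmem : w ∈ s(z, w') := (mem_unclAt.1 he1).2.1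
        rcases Sym2.mem_iff.1 hwmem with rfl | rfl
        · exact absurd rfl hwz
        · rfl
      · rintro rfl
        constructor
        · exact mem_unclAt.2 ⟨mk_mem_board (fun h => hwz (h.symm)),
            Sym2.mem_mk_right _ _, star_not_mem_M hz w, star_not_mem_B hN9 hz hwF⟩
        · rw [hS]
          exact Finset.mem_image.2 ⟨w, hw, rfl⟩
    have := Finset.card_sdiff_add_card_inter (unclAt q w) (lockSet q z)
    rw [hint, Finset.card_singleton] at this
    rw [huncl'']
    omega
  by_cases hcr : ∃ w ∈ (Cset m q).erase z, (unclAt q w).card = 3 * m + 1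
  · -- a crosser exists : ModeLW
    obtain ⟨w₀, hw₀, hc₀⟩ := hcr
    refine Or.inr (Or.inl ⟨z, w₀, fun h => (Finset.mem_erase.1 hw₀).1 h.symm, hzH'', ?_, ?_⟩)
    · refine Finset.mem_filter.2 ⟨by rw [hFR'']; rw [hFR]; exact (Finset.mem_erase.1 hw₀).2, ?_⟩
      have := hdrop w₀ hw₀
      omega
    · right
      rw [hp'', breakerMove_B]
      refine Finset.mem_union_right _ ?_
      rw [hS]
      exact Finset.mem_image.2 ⟨w₀, hw₀, rfl⟩
  · -- no crossers : ModeL continues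
    push_neg at hcr
    have hstay : ∀ w ∈ (Cset m q).erase z, 3 * m + 2 ≤ (unclAt q w).card := by
      intro w hw
      have h1 := (Finset.mem_filter.1 (Finset.mem_erase.1 hw).2).2
      have h2 := hcr w hw
      omega
    have hmemC : ∀ v, v ∈ Cset m q ↔ v ∈ FR q ∧ 3 * m < (unclAt q v).card := by
      intro v; simp [Cset]
    have hmemC'' : ∀ v, v ∈ Cset m p'' ↔ v ∈ FR p'' ∧ 3 * m < (unclAt p'' v).card := by
      intro v; simp [Cset]
    have hCeq : Cset m p'' = (Cset m q).erase z := by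
      ext v
      rw [hmemC'' v, Finset.mem_erase, hmemC v, hFR'']
      constructor
      · rintro ⟨hvF, hvc⟩
        have hvz : v ≠ z := by
          rintro rfl
          omega
        have hvsub : (unclAt p'' v).card ≤ (unclAt q v).card :=
          Finset.card_le_card (by rw [huncl'']; exact Finset.sdiff_subset)
        exact ⟨hvz, hvF, by omega⟩
      · rintro ⟨hvz, hvF, hvc⟩
        have hmem : v ∈ (Cset m q).erase z :=
          Finset.mem_erase.2 ⟨hvz, (hmemC v).2 ⟨hvF, hvc⟩⟩
        have h1 := hdrop v hmem
        have h2 := hstay v hmem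
        exact ⟨hvF, by omega⟩
    have hxlb : 2 ≤ xC m q := by omega
    have hxCdef : xC m q = (Cset m q).card := rfl
    have hne'' : (Cset m p'').Nonempty := by
      rw [hCeq, ← Finset.card_pos, Finset.card_erase_of_mem hzC]
      omega
    have hx'' : xC m p'' = xC m q - 1 := by
      unfold xC
      rw [hCeq, Finset.card_erase_of_mem hzC]
    -- bdeg of remaining C members increased by exactly 1
    have hbump : ∀ v ∈ Cset m p'', bdeg p'' v = bdeg q v + 1 := by
      intro v hv
      rw [hCeq] at hv
      rw [hdeg v, hdegS v, if_neg (Finset.mem_erase.1 hv).1, if_pos hv]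
    have hpair : ∀ v ∈ Cset m p'',
        bdeg p'' v = lam m q + 1 ∨ bdeg p'' v = (lam m q + 1) + 1 := by
      intro v hv
      have h1 := hbump v hv
      have h2 := htv v (by rw [hCeq] at hv; exact (Finset.mem_erase.1 hv).2)
      omega
    obtain ⟨htv'', hlam''⟩ := twoval_of_pair (lam m q + 1) hpair hne''
    refine Or.inr (Or.inr ⟨z, ?_, ?_, ?_, htv'', hne'', ?_, ?_⟩)
    · -- Hset p'' = {z}
      ext v
      simp only [Hset, Finset.mem_filter, Finset.mem_singleton]
      constructor
      · rintro ⟨hvF, hvc⟩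
        by_contra hvz
        rw [hFR''] at hvF
        have hvC : v ∈ (Cset m q).erase z := by
          rw [hFR] at hvF
          exact Finset.mem_erase.2 ⟨hvz, hvF⟩
        have := hdrop v hvC
        have := hstay v hvC
        omega
      · rintro rfl
        exact ⟨by rw [hFR'']; exact hz, hzhot⟩
    · -- all z-fresh edges claimed
      intro w hwF hwz
      rw [hFR''] at hwF
      right
      rw [hp'', breakerMove_B]
      refine Finset.mem_union_right _ ?_
      rw [hS]
      refine Finset.mem_image.2 ⟨w, Finset.mem_erase.2 ⟨hwz, by rwa [← hFR]⟩, rfl⟩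
    · -- N9L
      intro e he
      rw [hp'', breakerMove_B] at he
      rcases Finset.mem_union.1 he with he | he
      · obtain ⟨u, hu, hud⟩ := hN9 e he
        exact ⟨u, hu, Or.inl (by rwa [hFR''])⟩
      · rw [hS] at he
        obtain ⟨w, hw, rfl⟩ := Finset.mem_image.1 he
        exact ⟨z, Sym2.mem_mk_left _ _, Or.inr rfl⟩
    · -- degree sum condition
      rw [hx'']
      omega
    · rw [hx'']
      omega

end SBC
namespace SBC
open scoped Classical
variable {n : ℕ}

/-- at most two vertices lie in an edge -/
lemma card_mem_edge (e : Sym2 (Fin n)) :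
    (Finset.univ.filter (fun v : Fin n => v ∈ e)).card ≤ 2 := by
  induction e with
  | _ a b =>
    refine le_trans (Finset.card_le_card (fun v hv => ?_))
      ((Finset.card_insert_le a {b}).trans (by simp))
    simp only [Finset.mem_filter, Sym2.mem_iff] at hv
    rcases hv.2 with rfl | rfl
    · exact Finset.mem_insert_self _ _
    · exact Finset.mem_insert_of_mem (Finset.mem_singleton_self _)

lemma unclAt_maker_of_fresh {m : ℕ} {p : MBPos n} {e : Sym2 (Fin n)} {v : Fin n}
    (hv : v ∈ FR (makerMove p e)) : unclAt (makerMove p e) v = unclAt p v := by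
  rcases makerMove_cases p e with h | ⟨_, _, _, h⟩
  · rw [h]
  · have hve : v ∉ e := ((FR_makerMove_eff h v).1 hv).2
    exact unclAt_makerMove_not_mem hve

lemma Hset_maker_empty {m : ℕ} {p : MBPos n} {e : Sym2 (Fin n)} (hH : Hset m p = ∅) :
    Hset m (makerMove p e) = ∅ := by
  rw [Finset.eq_empty_iff_forall_notMem]
  intro v hv
  obtain ⟨hvF, hvc⟩ := Finset.mem_filter.1 hv
  rw [unclAt_maker_of_fresh (m := m) hvF] at hvc
  have : v ∈ Hset m p :=
    Finset.mem_filter.2 ⟨FR_makerMove_subset p e hvF, hvc⟩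
  rw [hH] at this
  exact absurd this (Finset.notMem_empty _)

lemma Cset_maker_eq (m : ℕ) (p : MBPos n) (e : Sym2 (Fin n)) :
    Cset m (makerMove p e) = (Cset m p).filter (fun v => v ∈ FR (makerMove p e)) := by
  ext v
  simp only [Cset, Finset.mem_filter]
  constructor
  · rintro ⟨hvF, hvc⟩
    rw [unclAt_maker_of_fresh (m := m) hvF] at hvc
    exact ⟨⟨FR_makerMove_subset p e hvF, hvc⟩, hvF⟩
  · rintro ⟨⟨hvF, hvc⟩, hvF'⟩
    rw [unclAt_maker_of_fresh (m := m) hvF']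
    exact ⟨hvF', hvc⟩

lemma Cset_maker_subset (m : ℕ) (p : MBPos n) (e : Sym2 (Fin n)) :
    Cset m (makerMove p e) ⊆ Cset m p := by
  rw [Cset_maker_eq]
  exact Finset.filter_subset _ _

lemma Cset_sdiff_card (m : ℕ) (p : MBPos n) (e : Sym2 (Fin n)) :
    (Cset m p \ Cset m (makerMove p e)).card ≤ 2 := by
  rcases makerMove_cases p e with h | ⟨_, _, _, h⟩
  · rw [h, Finset.sdiff_self, Finset.card_empty]; omega
  · refine le_trans (Finset.card_le_card (fun v hv => ?_)) (card_mem_edge e)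
    obtain ⟨hvC, hvn⟩ := Finset.mem_sdiff.1 hv
    refine Finset.mem_filter.2 ⟨Finset.mem_univ _, ?_⟩
    by_contra hve
    apply hvn
    rw [Cset_maker_eq]
    refine Finset.mem_filter.2 ⟨hvC, ?_⟩
    rw [FR_makerMove_eff h]
    exact ⟨(Finset.mem_filter.1 hvC).1, hve⟩

lemma xC_maker_ge (m : ℕ) (p : MBPos n) (e : Sym2 (Fin n)) :
    xC m p ≤ xC m (makerMove p e) + 2 := by
  have h1 := Finset.card_sdiff_add_card_eq_card (Cset_maker_subset m p e)
  have h2 := Cset_sdiff_card m p e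
  unfold xC
  omega

lemma xC_maker_le (m : ℕ) (p : MBPos n) (e : Sym2 (Fin n)) :
    xC m (makerMove p e) ≤ xC m p :=
  Finset.card_le_card (Cset_maker_subset m p e)

lemma lam_maker_ge {m : ℕ} {p : MBPos n} {e : Sym2 (Fin n)}
    (hq : (Cset m (makerMove p e)).Nonempty) : lam m p ≤ lam m (makerMove p e) := by
  obtain ⟨v₀, hv₀, hEq⟩ := lam_attained hq
  rw [← hEq, bdeg_makerMove]
  exact lam_le_bdeg (Cset_maker_subset m p e hv₀)

lemma twoval_maker {m : ℕ} {p : MBPos n} {e : Sym2 (Fin n)} (htv : twoval m p)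
    (hq : (Cset m (makerMove p e)).Nonempty) : twoval m (makerMove p e) := by
  refine (twoval_of_pair (lam m p) ?_ hq).1
  intro v hv
  rw [bdeg_makerMove]
  exact htv v (Cset_maker_subset m p e hv)

lemma MASS_maker {m : ℕ} {p : MBPos n} {e : Sym2 (Fin n)} (htv : twoval m p) :
    MASS m p ≤ MASS m (makerMove p e) + (xC m p - xC m (makerMove p e)) * (lam m p + 1) := by
  have hsplit : MASS m p = (∑ v ∈ Cset m p \ Cset m (makerMove p e), bdeg p v) +
      ∑ v ∈ Cset m (makerMove p e), bdeg p v := by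
    rw [MASS]
    exact (Finset.sum_sdiff (Cset_maker_subset m p e)).symm
  have h1 : (∑ v ∈ Cset m p \ Cset m (makerMove p e), bdeg p v) ≤
      (xC m p - xC m (makerMove p e)) * (lam m p + 1) := by
    calc (∑ v ∈ Cset m p \ Cset m (makerMove p e), bdeg p v)
        ≤ ∑ _v ∈ Cset m p \ Cset m (makerMove p e), (lam m p + 1) := by
          refine Finset.sum_le_sum (fun v hv => ?_)
          rcases htv v (Finset.mem_sdiff.1 hv).1 with h | h <;> omega
      _ = (Cset m p \ Cset m (makerMove p e)).card * (lam m p + 1) := by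
          rw [Finset.sum_const, smul_eq_mul]
      _ = (xC m p - xC m (makerMove p e)) * (lam m p + 1) := by
          congr 1
          have := Finset.card_sdiff_add_card_eq_card (Cset_maker_subset m p e)
          unfold xC
          omega
  have h2 : (∑ v ∈ Cset m (makerMove p e), bdeg p v) = MASS m (makerMove p e) := by
    rw [MASS]
    refine Finset.sum_congr rfl (fun v _ => ?_)
    rw [bdeg_makerMove]
  omega

lemma N9_maker {p : MBPos n} {e : Sym2 (Fin n)} (h : N9p p) : N9p (makerMove p e) := by
  intro f hf
  rw [makerMove_B] at hf
  obtain ⟨u, hu, hud⟩ := h f hf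
  exact ⟨u, hu, fun hc => hud (FR_makerMove_subset p e hc)⟩

lemma N5s_maker {m : ℕ} {p : MBPos n} {e : Sym2 (Fin n)} (h : N5s m p) :
    N5s m (makerMove p e) := by
  intro f hf
  rw [makerMove_B] at hf
  obtain ⟨u, hu, hud, hb⟩ := h f hf
  exact ⟨u, hu, fun hc => hud (FR_makerMove_subset p e hc), by rwa [bdeg_makerMove]⟩

end SBC
namespace SBC
open scoped Classical
variable {n : ℕ}

lemma pour_step (m : ℕ) (hm : 100 ≤ m) (hn : n = 7 * m) (q : MBPos n)
    (hGP : GP q) (hH : Hset m q = ∅) (hx : 3 * m + 2 ≤ xC m q) (hN9 : N9p q)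
    (htv : twoval m q) (hlow : lam m q < 2 * m) (hN5 : N5s m q)
    (h3 : (usableDead m q).Nonempty) :
    Hset m (breakerMove q (bs m q)) = ∅ ∧
    Cset m (breakerMove q (bs m q)) = Cset m q ∧
    N9p (breakerMove q (bs m q)) ∧
    twoval m (breakerMove q (bs m q)) ∧
    ((N5s m (breakerMove q (bs m q)) ∧
        MASS m (breakerMove q (bs m q)) = MASS m q + 3 * m) ∨
      2 * m ≤ lam m (breakerMove q (bs m q))) := by
  have hFR : FR q = Cset m q := FR_eq_Cset_of_Hempty hH
  have hCne : (Cset m q).Nonempty := by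
    rw [← Finset.card_pos]
    have : xC m q = (Cset m q).card := rfl
    omega
  obtain ⟨v₀, hv₀C, hv₀⟩ := lam_attained hCne
  have hv₀F : v₀ ∈ FR q := by rw [hFR]; exact hv₀C
  have he : (elig m q).Nonempty := ⟨v₀, Finset.mem_filter.2 ⟨hv₀F, by rw [hv₀]; exact hlow⟩⟩
  set d := (usableDead m q).min' h3 with hddef
  have hbs : bs m q = pourSet m q d := by
    rw [bs, dif_neg (by rw [hH]; exact Finset.not_nonempty_empty), dif_neg, dif_pos h3]
    rintro ⟨-, hc⟩
    rw [hFR] at hc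
    have : xC m q = (Cset m q).card := rfl
    omega
  have hdmem := Finset.mem_filter.1 ((usableDead m q).min'_mem h3)
  have hdF : d ∉ FR q := hdmem.2.1
  have hdB : bdeg q d < 3 * m := hdmem.2.2
  have helig_sub : elig m q ⊆ Cset m q := by
    intro v hv
    rw [← hFR]
    exact (Finset.mem_filter.1 hv).1
  have hv₀e : v₀ ∈ elig m q := Finset.mem_filter.2 ⟨hv₀F, by rw [hv₀]; exact hlow⟩
  have heM : eligMin m q he = lam m q := by
    apply le_antisymm
    · have h1 : bdeg q v₀ ∈ (elig m q).image (bdeg q) := Finset.mem_image_of_mem _ hv₀e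
      have h2 : eligMin m q he ≤ bdeg q v₀ := Finset.min'_le _ _ h1
      exact le_trans h2 hv₀.le
    · obtain ⟨w, hw, hEq⟩ := Finset.mem_image.1
        (Finset.min'_mem ((elig m q).image (bdeg q)) (he.image _))
      rw [eligMin, ← hEq]
      exact lam_le_bdeg (helig_sub hw)
  have hTsub : Tset m q he ⊆ Cset m q := (Tset_subset m q he).trans helig_sub
  have hTF : Tset m q he ⊆ FR q := by rw [hFR]; exact hTsub
  have hdT : d ∉ Tset m q he := fun h => hdF (hTF h)
  have havail : ∀ w ∈ Tset m q he, s(d, w) ∈ board n ∧ s(d, w) ∉ q.M ∧ s(d, w) ∉ q.B := by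
    intro w hw
    have hwF : w ∈ FR q := hTF hw
    have hdw : d ≠ w := fun h => hdF (h ▸ hwF)
    refine ⟨mk_mem_board hdw, ?_, ?_⟩
    · intro hmem
      exact mem_FR.1 hwF _ hmem (Sym2.mem_mk_right _ _)
    · intro hmem
      obtain ⟨u, hu, hud, hub⟩ := hN5 _ hmem
      rcases Sym2.mem_iff.1 hu with rfl | rfl
      · omega
      · exact hud hwF
  have hPS : pourSet m q d = (Tset m q he).image (fun w => s(d, w)) := by
    rw [pourSet, dif_pos he]
    apply Finset.filter_eq_self.2
    intro e hee
    obtain ⟨w, hw, rfl⟩ := Finset.mem_image.1 hee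
    exact havail w hw
  have hdisj : Disjoint q.B (pourSet m q d) := by
    rw [Finset.disjoint_right]
    intro e hee
    rw [hPS] at hee
    obtain ⟨w, hw, rfl⟩ := Finset.mem_image.1 hee
    exact (havail w hw).2.2
  rw [hbs]
  set p'' := breakerMove q (pourSet m q d) with hp''
  have hFR'' : FR p'' = FR q := FR_breakerMove q _
  have hdeg : ∀ v, bdeg p'' v = bdeg q v + degIn (pourSet m q d) v :=
    bdeg_breakerMove q _ hdisj
  have hdegS : ∀ v, degIn (pourSet m q d) v =
      if v = d then (Tset m q he).card else (if v ∈ Tset m q he then 1 else 0) := by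
    intro v
    rw [hPS]
    exact degIn_star d _ hdT v
  have huncl'' : ∀ v, unclAt p'' v = unclAt q v \ pourSet m q d := unclAt_breakerMove q _
  -- every fresh vertex keeps many unclaimed edges
  have h5 : ∀ v ∈ FR q, 3 * m < (unclAt p'' v).card := by
    intro v hv
    have hvC : v ∈ Cset m q := by rw [← hFR]; exact hv
    have hvd : v ≠ d := fun h => hdF (h ▸ hv)
    have hbv : bdeg q v ≤ lam m q + 1 := by
      rcases htv v hvC with h | h <;> omega
    have hcv := unclAt_card_fresh q hGP hv
    have hinter : (unclAt q v ∩ pourSet m q d).card ≤ 1 := by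
      calc (unclAt q v ∩ pourSet m q d).card
          ≤ ((pourSet m q d).filter (fun e => v ∈ e)).card := by
            refine Finset.card_le_card ?_
            intro f hf
            obtain ⟨hf1, hf2⟩ := Finset.mem_inter.1 hf
            exact Finset.mem_filter.2 ⟨hf2, (mem_unclAt.1 hf1).2.1⟩
        _ = degIn (pourSet m q d) v := rfl
        _ ≤ 1 := by rw [hdegS v, if_neg hvd]; split <;> omega
    have := Finset.card_sdiff_add_card_inter (unclAt q v) (pourSet m q d)
    rw [huncl'']
    omega
  have hH'' : Hset m p'' = ∅ := by
    rw [Finset.eq_empty_iff_forall_notMem]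
    intro v hv
    obtain ⟨hvF, hvc⟩ := Finset.mem_filter.1 hv
    rw [hFR''] at hvF
    have := h5 v hvF
    omega
  have hC'' : Cset m p'' = Cset m q := by
    ext v
    simp only [Cset, Finset.mem_filter, hFR'']
    constructor
    · rintro ⟨hvF, hvc⟩
      refine ⟨hvF, ?_⟩
      have hsub : unclAt p'' v ⊆ unclAt q v := by
        rw [huncl'']; exact Finset.sdiff_subset
      have := Finset.card_le_card hsub
      omega
    · rintro ⟨hvF, _⟩
      exact ⟨hvF, h5 v hvF⟩
  have hCne'' : (Cset m p'').Nonempty := by rw [hC'']; exact hCne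
  -- twoval after the pour
  have hTLmem : ∀ v ∈ Cset m q, bdeg q v = lam m q → v ∈ TLs m q he := by
    intro v hv hEq
    refine Finset.mem_filter.2 ⟨Finset.mem_filter.2 ⟨by rw [hFR]; exact hv, ?_⟩, by rw [heM]; exact hEq⟩
    rw [hEq]; exact hlow
  have hbump : ∀ v ∈ Cset m q,
      bdeg p'' v = bdeg q v + (if v ∈ Tset m q he then 1 else 0) := by
    intro v hv
    have hvd : v ≠ d := fun h => hdF (h ▸ (by rw [hFR]; exact hv : v ∈ FR q))
    rw [hdeg v, hdegS v, if_neg hvd]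
  have htv'' : twoval m p'' := by
    by_cases hk : 3 * m ≤ (TLs m q he).card
    · -- targets are a subset of the minimum level
      have hTsubTL : Tset m q he ⊆ TLs m q he := by
        rw [Tset, if_pos hk]; exact pick_subset _ _
      refine (twoval_of_pair (lam m q) ?_ hCne'').1
      intro v hv
      rw [hC''] at hv
      rw [hbump v hv]
      by_cases hvT : v ∈ Tset m q he
      · rw [if_pos hvT]
        have := (Finset.mem_filter.1 (hTsubTL hvT)).2
        rw [heM] at this
        omega
      · rw [if_neg hvT]
        rcases htv v hv with h | h <;> omega
    · -- all minimum-level vertices are targeted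
      have hTLsubT : TLs m q he ⊆ Tset m q he := by
        rw [Tset, if_neg hk]; exact Finset.subset_union_left
      refine (twoval_of_pair (lam m q + 1) ?_ hCne'').1
      intro v hv
      rw [hC''] at hv
      rw [hbump v hv]
      by_cases hvT : v ∈ Tset m q he
      · rw [if_pos hvT]
        rcases htv v hv with h | h <;> omega
      · rw [if_neg hvT]
        rcases htv v hv with h | h
        · exact absurd (hTLsubT (hTLmem v hv h)) hvT
        · left; omega
  -- mass gain
  have hMASS : MASS m p'' = MASS m q + (Tset m q he).card := by
    have h1 : MASS m p'' = ∑ v ∈ Cset m q, bdeg p'' v := by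
      rw [MASS, hC'']
    rw [h1]
    have h2 : ∀ v ∈ Cset m q, bdeg p'' v = bdeg q v + (if v ∈ Tset m q he then 1 else 0) := hbump
    rw [Finset.sum_congr rfl h2, Finset.sum_add_distrib]
    congr 1
    rw [← Finset.card_filter, Finset.filter_mem_eq_inter,
      Finset.inter_eq_right.2 hTsub]
  refine ⟨hH'', hC'', ?_, htv'', ?_⟩
  · -- N9
    intro f hf
    rw [hp'', breakerMove_B] at hf
    rcases Finset.mem_union.1 hf with hf | hf
    · obtain ⟨u, hu, hud⟩ := hN9 f hf
      exact ⟨u, hu, by rwa [hFR'']⟩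
    · rw [hPS] at hf
      obtain ⟨w, hw, rfl⟩ := Finset.mem_image.1 hf
      exact ⟨d, Sym2.mem_mk_left _ _, by rwa [hFR'']⟩
  · by_cases hTc : (Tset m q he).card = 3 * m
    · left
      constructor
      · -- N5s preserved
        intro f hf
        rw [hp'', breakerMove_B] at hf
        rcases Finset.mem_union.1 hf with hf | hf
        · obtain ⟨u, hu, hud, hub⟩ := hN5 f hf
          refine ⟨u, hu, by rwa [hFR''], ?_⟩
          rw [hdeg u]
          omega
        · rw [hPS] at hf
          obtain ⟨w, hw, rfl⟩ := Finset.mem_image.1 hf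
          refine ⟨d, Sym2.mem_mk_left _ _, by rwa [hFR''], ?_⟩
          rw [hdeg d, hdegS d, if_pos rfl, hTc]
          omega
      · rw [hMASS, hTc]
    · right
      -- the pour was partial: all of `elig` was targeted and `lam = 2m - 1`
      have hk : ¬ 3 * m ≤ (TLs m q he).card := by
        intro hk
        rw [Tset, if_pos hk, card_pick] at hTc
        omega
      have hTHfull : pick (THs m q he) (3 * m - (TLs m q he).card) = THs m q he := by
        apply Finset.eq_of_subset_of_card_le (pick_subset _ _)
        rw [card_pick]
        rcases Nat.le_total (THs m q he).card (3 * m - (TLs m q he).card) with h | h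
        · omega
        · exfalso
          apply hTc
          rw [Tset, if_neg hk, Finset.card_union_of_disjoint, card_pick]
          · omega
          · rw [Finset.disjoint_left]
            intro a ha ha'
            have h1 := (Finset.mem_filter.1 ha).2
            have h2 := (Finset.mem_filter.1 (pick_subset _ _ ha')).2
            exact h2 h1
      have hTelig : Tset m q he = elig m q := by
        rw [Tset, if_neg hk, hTHfull]
        exact Finset.filter_union_filter_not_eq _ _
      have heligc : (elig m q).card < 3 * m := by
        have := Tset_card_le m q he
        rw [hTelig] at this hTc
        omega
      obtain ⟨v₁, hv₁C, hv₁e⟩ : ∃ v₁ ∈ Cset m q, v₁ ∉ elig m q := by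
        by_contra hc
        push_neg at hc
        have := Finset.card_le_card hc
        have hxc : xC m q = (Cset m q).card := rfl
        omega
      have hv₁b : 2 * m ≤ bdeg q v₁ := by
        by_contra hb
        push_neg at hb
        exact hv₁e (Finset.mem_filter.2 ⟨by rw [hFR]; exact hv₁C, hb⟩)
      have hlam1 : lam m q = 2 * m - 1 := by
        rcases htv v₁ hv₁C with h | h <;> omega
      have hpost : ∀ v ∈ Cset m p'', 2 * m ≤ bdeg p'' v := by
        intro v hv
        rw [hC''] at hv
        rw [hbump v hv]
        rcases htv v hv with h | h
        · have hvT : v ∈ Tset m q he := by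
            rw [hTelig]
            exact Finset.mem_filter.2 ⟨by rw [hFR]; exact hv, by omega⟩
          rw [if_pos hvT]
          omega
        · split <;> omega
      obtain ⟨v₂, hv₂, hv₂e⟩ := lam_attained hCne''
      rw [← hv₂e]
      exact hpost v₂ hv₂

end SBC
namespace SBC
open scoped Classical
variable {n : ℕ}

lemma xC_le_n (m : ℕ) (p : MBPos n) : xC m p ≤ n := by
  calc xC m p ≤ Finset.univ.card := Finset.card_le_card (Finset.subset_univ _)
    _ = n := by rw [Finset.card_univ, Fintype.card_fin]

lemma breakerMove_empty (q : MBPos n) : breakerMove q ∅ = q := by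
  cases q
  simp [breakerMove]

lemma MASS_eq_of_Cset_eq {m : ℕ} {p : MBPos n} {e : Sym2 (Fin n)}
    (h : Cset m (makerMove p e) = Cset m p) : MASS m (makerMove p e) = MASS m p := by
  rw [MASS, MASS, h]
  exact Finset.sum_congr rfl (fun v _ => bdeg_makerMove p e v)

lemma lam_eq_of_Cset_eq {m : ℕ} {p : MBPos n} {e : Sym2 (Fin n)}
    (h : Cset m (makerMove p e) = Cset m p) (hne : (Cset m p).Nonempty) :
    lam m (makerMove p e) = lam m p := by
  have h1 : (Cset m (makerMove p e)).Nonempty := by rw [h]; exact hne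
  apply le_antisymm
  · obtain ⟨v, hv, hEq⟩ := lam_attained hne
    have hv' : v ∈ Cset m (makerMove p e) := by rw [h]; exact hv
    have := lam_le_bdeg hv'
    rw [bdeg_makerMove, hEq] at this
    exact this
  · exact lam_maker_ge h1

lemma ModeP_round (m : ℕ) (hm : 100 ≤ m) (hn : n = 7 * m) (p : MBPos n)
    (e : Sym2 (Fin n)) (hGP : GP p) (hP : ModeP m p) :
    WONp (round m p e) ∨ ModeLW m (round m p e) ∨ ModeL m (round m p e) ∨
      ModeP m (round m p e) := by
  obtain ⟨hH, hx, hN9, htv, hdisj⟩ := hP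
  set q := makerMove p e with hqdef
  have hGPq : GP q := GP_makerMove p hGP e
  have hHq : Hset m q = ∅ := Hset_maker_empty hH
  have hN9q : N9p q := N9_maker hN9
  have hxq2 : xC m p ≤ xC m q + 2 := xC_maker_ge m p e
  have hxql : xC m q ≤ xC m p := xC_maker_le m p e
  have hCqne : (Cset m q).Nonempty := by
    rw [← Finset.card_pos]
    have : xC m q = (Cset m q).card := rfl
    omega
  have htvq : twoval m q := twoval_maker htv hCqne
  have hlamq : lam m p ≤ lam m q := lam_maker_ge hCqne
  have hround : round m p e = breakerMove q (bs m q) := rfl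
  rw [hround]
  by_cases hxcase : xC m q ≤ 3 * m + 1
  · -- lock entry
    have hsum : 4 * m ≤ lam m q + xC m q := by
      rcases hdisj with ⟨hlow, hN5, hmass⟩ | hhigh
      · -- low mode : use the mass invariant
        have hxp0 : 0 < xC m p := by omega
        have hub := MASS_le m p htv
        have hlamQle : lamQ m (xC m p) ≤ (lam m p : ℚ) + 1 := by
          have h1 : (xC m p : ℚ) * lamQ m (xC m p) ≤ (xC m p : ℚ) * ((lam m p : ℚ) + 1) := by
            refine le_trans hmass ?_
            have : (MASS m p : ℚ) ≤ (xC m p : ℚ) * ((lam m p : ℚ) + 1) := by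
              have := hub
              push_cast
              exact_mod_cast (by exact_mod_cast this : (MASS m p : ℚ) ≤ ((xC m p * (lam m p + 1) : ℕ) : ℚ))
            exact this
          have hx0Q : (0:ℚ) < (xC m p : ℚ) := by exact_mod_cast hxp0
          exact le_of_mul_le_mul_left h1 hx0Q
        have hentry := lamQ_entry m hm (x := (xC m p : ℚ))
          (by exact_mod_cast (by omega : 3 * m ≤ xC m p))
        have hQ : (4 * m + 3 : ℚ) ≤ (xC m p : ℚ) + (lam m p : ℚ) + 1 := by linarith
        have hN : 4 * m + 2 ≤ xC m p + lam m p := by exact_mod_cast (by linarith : (4 * m + 2 : ℚ) ≤ ((xC m p : ℚ) + (lam m p : ℚ)))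
        omega
      · -- high mode
        omega
    rcases lock_step m hm hn q hGPq hHq hCqne hxcase hsum htvq hN9q with h | h | h
    · exact Or.inl h
    · exact Or.inr (Or.inl h)
    · exact Or.inr (Or.inr (Or.inl h))
  · push_neg at hxcase
    have hxq : 3 * m + 2 ≤ xC m q := hxcase
    by_cases h3 : (usableDead m q).Nonempty
    · by_cases hlowq : lam m q < 2 * m
      · -- low-mode pour
        have hlowp : lam m p < 2 * m ∧ N5s m p ∧
            ((xC m p : ℚ) * lamQ m (xC m p) ≤ (MASS m p : ℚ)) := by
          rcases hdisj with h | hhigh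
          · exact h
          · omega
        obtain ⟨hlowp', hN5p, hmassp⟩ := hlowp
        have hN5q : N5s m q := N5s_maker hN5p
        obtain ⟨hH'', hC'', hN9'', htv'', hfin⟩ :=
          pour_step m hm hn q hGPq hHq hxq hN9q htvq hlowq hN5q h3
        have hx'' : xC m (breakerMove q (bs m q)) = xC m q := by
          unfold xC
          rw [hC'']
        refine Or.inr (Or.inr (Or.inr ⟨hH'', by omega, hN9'', htv'', ?_⟩))
        rcases hfin with ⟨hN5'', hM''⟩ | hhigh''
        · by_cases hl'' : lam m (breakerMove q (bs m q)) < 2 * m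
          · left
            refine ⟨hl'', hN5'', ?_⟩
            -- the mass chain
            have hδ : xC m q ≤ xC m p := hxql
            have hx7Q : (xC m p : ℚ) ≤ 7 * m := by
              have h := xC_le_n m p
              exact_mod_cast (by omega : xC m p ≤ 7 * m)
            have hstep := mass_step m hm (x := (xC m p : ℚ))
              (δ := ((xC m p - xC m q : ℕ) : ℚ)) (lm := (lam m p : ℚ)) (Ms := (MASS m p : ℚ))
              (by rw [Nat.cast_sub hδ]
                  have h0 : (0:ℚ) ≤ (xC m q : ℚ) := by positivity
                  linarith)
              hx7Q
              (by positivity)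
              (by exact_mod_cast (by omega : xC m p - xC m q ≤ 2))
              (by exact_mod_cast lam_mul_le_MASS m p)
              hmassp
              (by exact_mod_cast (by omega : 0 < xC m p))
            have hsub : ((xC m p : ℚ) - ((xC m p - xC m q : ℕ) : ℚ)) = (xC m q : ℚ) := by
              push_cast [Nat.cast_sub hδ]
              ring
            rw [hsub] at hstep
            -- MASS p - δ(lam p + 1) ≤ MASS q
            have hMm := MASS_maker (e := e) htv
            have hMq : (MASS m p : ℚ) - ((xC m p - xC m q : ℕ) : ℚ) * ((lam m p : ℚ) + 1)
                ≤ (MASS m q : ℚ) := by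
              have : (MASS m p : ℚ) ≤ (MASS m q : ℚ) + ((xC m p - xC m q : ℕ) : ℚ) * ((lam m p : ℚ) + 1) := by
                exact_mod_cast hMm
              linarith
            have hfinal : (xC m q : ℚ) * lamQ m (xC m q) ≤ (MASS m q : ℚ) + 3 * m := by
              calc (xC m q : ℚ) * lamQ m (xC m q)
                  ≤ (MASS m p : ℚ) - ((xC m p - xC m q : ℕ) : ℚ) * ((lam m p : ℚ) + 1) + 3 * m := hstep
                _ ≤ (MASS m q : ℚ) + 3 * m := by linarith
            rw [hx'', hM'']
            push_cast
            push_cast at hfinal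
            linarith
          · right; omega
        · exact Or.inr hhigh''
      · -- high mode : elig is empty, Breaker passes
        push_neg at hlowq
        have helig : elig m q = ∅ := by
          rw [Finset.eq_empty_iff_forall_notMem]
          intro v hv
          obtain ⟨hvF, hvb⟩ := Finset.mem_filter.1 hv
          have hvC : v ∈ Cset m q := by rw [← FR_eq_Cset_of_Hempty hHq]; exact hvF
          have := lam_le_bdeg hvC
          omega
        have hbs : bs m q = ∅ := by
          rw [bs, dif_neg (by rw [hHq]; exact Finset.not_nonempty_empty), dif_neg, dif_pos h3,
            pourSet, dif_neg (by rw [helig]; exact Finset.not_nonempty_empty)]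
          rintro ⟨-, hc⟩
          rw [FR_eq_Cset_of_Hempty hHq] at hc
          have : xC m q = (Cset m q).card := rfl
          omega
        rw [hbs, breakerMove_empty]
        exact Or.inr (Or.inr (Or.inr ⟨hHq, by omega, hN9q, htvq, Or.inr hlowq⟩))
    · -- no usable dead vertex : Breaker passes
      have hbs : bs m q = ∅ := by
        rw [bs, dif_neg (by rw [hHq]; exact Finset.not_nonempty_empty), dif_neg, dif_neg h3]
        rintro ⟨-, hc⟩
        rw [FR_eq_Cset_of_Hempty hHq] at hc
        have : xC m q = (Cset m q).card := rfl
        omega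
      rw [hbs, breakerMove_empty]
      refine Or.inr (Or.inr (Or.inr ⟨hHq, by omega, hN9q, htvq, ?_⟩))
      rcases hdisj with ⟨hlow, hN5, hmass⟩ | hhigh
      · -- low : nothing was killed, otherwise there would be a usable dead vertex
        have hCeq : Cset m q = Cset m p := by
          apply Finset.eq_of_subset_of_card_le (Cset_maker_subset m p e)
          by_contra hc
          push_neg at hc
          have hc' : (Cset m q).card < (Cset m p).card := hc
          have : ∃ v ∈ Cset m p, v ∉ Cset m q := by
            by_contra hc2
            push_neg at hc2
            have h5 : (Cset m p).card ≤ (Cset m q).card := Finset.card_le_card hc2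
            omega
          obtain ⟨v, hvC, hvn⟩ := this
          apply h3
          refine ⟨v, Finset.mem_filter.2 ⟨Finset.mem_univ _, ?_, ?_⟩⟩
          · -- v is dead in q
            intro hvF
            apply hvn
            rw [Cset_maker_eq]
            exact Finset.mem_filter.2 ⟨hvC, hvF⟩
          · rw [bdeg_makerMove]
            have := htv v hvC
            omega
        have hCq : Cset m (makerMove p e) = Cset m p := hCeq
        have hMeq : MASS m q = MASS m p := MASS_eq_of_Cset_eq (m := m) hCq
        have hpne : (Cset m p).Nonempty := by
          rw [← hCq]
          exact hCqne
        have hleq : lam m q = lam m p := lam_eq_of_Cset_eq (m := m) hCq hpne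
        have hxeq : xC m q = xC m p := by
          unfold xC
          rw [hqdef, hCq]
        left
        refine ⟨by omega, N5s_maker hN5, ?_⟩
        rw [hxeq, hMeq]
        exact hmass
      · exact Or.inr (by omega)

end SBC
namespace SBC
open scoped Classical
variable {n : ℕ}

lemma ModeL_round (m : ℕ) (hm : 100 ≤ m) (hn : n = 7 * m) (p : MBPos n)
    (e : Sym2 (Fin n)) (hGP : GP p) (hL : ModeL m p) :
    WONp (round m p e) ∨ ModeLW m (round m p e) ∨ ModeL m (round m p e) ∨
      ModeP m (round m p e) := by
  obtain ⟨z, hHz, hall, hN9L, htv, hCne, hsum, hxle⟩ := hL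
  have hzH : z ∈ Hset m p := by rw [hHz]; exact Finset.mem_singleton_self z
  have hzF : z ∈ FR p := Hset_subset_FR m p hzH
  have hround : round m p e = breakerMove (makerMove p e) (bs m (makerMove p e)) := rfl
  rcases makerMove_cases p e with hc | ⟨hb, hmm, hbb, hc⟩
  · -- illegal move : z still hot
    left
    rw [hround]
    apply finish_step
    rw [hc]
    exact ⟨z, hzH⟩
  · by_cases hze : z ∈ e
    · -- Maker kills the hot vertex
      have hnd : ¬ e.IsDiag := mem_board_iff.1 hb
      have hspec := Sym2.other_spec' hze
      set u := Sym2.Mem.other' hze with hudef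
      have huz : u ≠ z := by
        intro hEq
        apply hnd
        rw [← hspec, hEq]
        exact Sym2.mk_isDiag_iff.2 rfl
      have huF : u ∉ FR p := by
        intro huF
        rcases hall u huF huz with h | h
        · rw [← hspec] at hmm
          exact hmm h
        · rw [← hspec] at hbb
          exact hbb h
      set q := makerMove p e with hqdef
      have hFRq : FR q = (FR p).erase z := by
        ext v
        rw [hqdef, FR_makerMove_eff hc, Finset.mem_erase]
        constructor
        · rintro ⟨hvF, hve⟩
          refine ⟨fun hEq => hve (hEq ▸ hze), hvF⟩
        · rintro ⟨hvz, hvF⟩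
          refine ⟨hvF, fun hve => ?_⟩
          rw [← hspec] at hve
          rcases Sym2.mem_iff.1 hve with h | h
          · exact hvz h
          · exact huF (h ▸ hvF)
      have hzC : z ∉ Cset m p := by
        intro hzC
        have h1 := (Finset.mem_filter.1 hzC).2
        have h2 := (Finset.mem_filter.1 hzH).2
        omega
      have hCq : Cset m q = Cset m p := by
        rw [hqdef, Cset_maker_eq]
        apply Finset.filter_eq_self.2
        intro v hv
        rw [← hqdef, hFRq, Finset.mem_erase]
        exact ⟨fun hEq => hzC (hEq ▸ hv), (Finset.mem_filter.1 hv).1⟩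
      have hHq : Hset m q = ∅ := by
        rw [Finset.eq_empty_iff_forall_notMem]
        intro v hv
        obtain ⟨hvF, hvc⟩ := Finset.mem_filter.1 hv
        rw [unclAt_maker_of_fresh (m := m) hvF] at hvc
        have hvF' : v ∈ FR p := FR_makerMove_subset p e hvF
        have : v ∈ Hset m p := Finset.mem_filter.2 ⟨hvF', hvc⟩
        rw [hHz, Finset.mem_singleton] at this
        subst this
        rw [hFRq] at hvF
        exact (Finset.mem_erase.1 hvF).1 rfl
      have hCqne : (Cset m q).Nonempty := by rw [hCq]; exact hCne
      have hxq : xC m q = xC m p := by unfold xC; rw [hCq]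
      have hlamEq : lam m q = lam m p := lam_eq_of_Cset_eq (m := m) (by rw [← hqdef]; exact hCq) hCne
      have hN9q : N9p q := by
        intro f hf
        rw [hqdef, makerMove_B] at hf
        obtain ⟨w, hw, hwd⟩ := hN9L f hf
        refine ⟨w, hw, ?_⟩
        rw [hFRq, Finset.mem_erase]
        rcases hwd with h | h
        · exact fun hc' => h hc'.2
        · exact fun hc' => hc'.1 h
      have htvq : twoval m q := twoval_maker htv hCqne
      rw [hround]
      rcases lock_step m hm hn q (GP_makerMove p hGP e) hHq hCqne (by omega)
        (by omega) htvq hN9q with h | h | h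
      · exact Or.inl h
      · exact Or.inr (Or.inl h)
      · exact Or.inr (Or.inr (Or.inl h))
    · -- z not touched : z still hot, Breaker finishes
      left
      rw [hround]
      exact finish_step m _ ⟨z, hot_survives hzH hze⟩

end SBC
namespace SBC
open scoped Classical
variable {n : ℕ}

lemma Inv_step (m : ℕ) (hm : 100 ≤ m) (hn : n = 7 * m) (p : MBPos n)
    (e : Sym2 (Fin n)) (hInv : Inv m p) : Inv m (round m p e) := by
  obtain ⟨hGP, hmode⟩ := hInv
  have hn0 : 0 < n := by omega
  constructor
  · -- GP is preserved
    have hleg := bs_legal m (3 * m) (le_refl _) hn0 (makerMove p e)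
    exact GP_breakerMove _ (GP_makerMove p hGP e) _ hleg.1 (fun f hf => (hleg.2.1 f hf).1)
  · rcases hmode with h | h | h | h
    · exact Or.inl (WONp_round m p e h)
    · exact Or.inl (ModeLW_round m p e h)
    · exact ModeL_round m hm hn p e hGP h
    · exact ModeP_round m hm hn p e hGP h

/-- the initial position satisfies the invariant -/
lemma Inv_init (m : ℕ) (hm : 100 ≤ m) (hn : n = 7 * m) :
    Inv m (⟨∅, ∅⟩ : MBPos n) := by
  set p0 : MBPos n := ⟨∅, ∅⟩ with hp0
  have hGP : GP p0 := ⟨Finset.empty_subset _, Finset.empty_subset _, Finset.disjoint_empty_left _⟩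
  have hFR : FR p0 = Finset.univ := by
    ext v
    simp [mem_FR, hp0]
  have huncl : ∀ v, (unclAt p0 v).card = n - 1 := by
    intro v
    have : unclAt p0 v = (board n).filter (fun e => v ∈ e) := by
      ext f
      simp [mem_unclAt, hp0, and_assoc]
    rw [this, card_edgesAt]
  have hbdeg : ∀ v, bdeg p0 v = 0 := by
    intro v
    simp [bdeg, degIn, hp0]
  have hC : Cset m p0 = Finset.univ := by
    rw [Finset.eq_univ_iff_forall]
    intro v
    refine Finset.mem_filter.2 ⟨by rw [hFR]; exact Finset.mem_univ _, ?_⟩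
    rw [huncl v, hn]
    omega
  have hxC : xC m p0 = n := by
    rw [xC, hC, Finset.card_univ, Fintype.card_fin]
  have hlam : lam m p0 = 0 := by
    have hCne : (Cset m p0).Nonempty := by
      rw [hC]
      exact ⟨⟨0, by omega⟩, Finset.mem_univ _⟩
    obtain ⟨v, hv, hEq⟩ := lam_attained hCne
    rw [← hEq, hbdeg]
  refine ⟨hGP, Or.inr (Or.inr (Or.inr ⟨?_, ?_, ?_, ?_, Or.inl ⟨?_, ?_, ?_⟩⟩))⟩
  · rw [Finset.eq_empty_iff_forall_notMem]
    intro v hv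
    have := (Finset.mem_filter.1 hv).2
    rw [huncl v, hn] at this
    omega
  · rw [hxC, hn]; omega
  · intro f hf
    simp [hp0] at hf
  · intro v _
    rw [hbdeg, hlam]
    left; rfl
  · rw [hlam]; omega
  · intro f hf
    simp [hp0] at hf
  · have hM : MASS m p0 = 0 := by
      rw [MASS]
      refine Finset.sum_eq_zero (fun v _ => hbdeg v)
    rw [hM, hxC, hn]
    push_cast
    have := lamQ_start m
    nlinarith [this]

/-- the invariant holds after every full round of play -/
lemma Inv_play (m : ℕ) (hm : 100 ≤ m) (hn : n = 7 * m)
    (ms : MBPos n → Sym2 (Fin n)) :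
    ∀ k, Inv m (playMF ms (bs m) (2 * k)) := by
  intro k
  induction k with
  | zero => exact Inv_init m hm hn
  | succ k ih =>
    have h1 : playMF ms (bs m) (2 * k + 1) =
        makerMove (playMF ms (bs m) (2 * k)) (ms (playMF ms (bs m) (2 * k))) := by
      rw [playMF]
      simp [Nat.mul_mod_right]
    have h2 : playMF ms (bs m) (2 * (k + 1)) =
        breakerMove (playMF ms (bs m) (2 * k + 1)) (bs m (playMF ms (bs m) (2 * k + 1))) := by
      have h21 : 2 * (k + 1) = (2 * k + 1) + 1 := by ring
      rw [h21, playMF]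
      have hmod : (2 * k + 1) % 2 = 1 := by omega
      simp [hmod]
    rw [h2, h1]
    exact Inv_step m hm hn _ _ ih

lemma Inv_fresh {m : ℕ} {p : MBPos n} (hm : 100 ≤ m) (hInv : Inv m p) :
    (FR p).Nonempty := by
  rcases hInv.2 with h | h | h | h
  · obtain ⟨v, hv, -⟩ := h
    exact ⟨v, hv⟩
  · obtain ⟨z₁, -, -, hz₁, -⟩ := h
    exact ⟨z₁, Hset_subset_FR m p hz₁⟩
  · obtain ⟨z, hHz, -⟩ := h
    exact ⟨z, Hset_subset_FR m p (by rw [hHz]; exact Finset.mem_singleton_self z)⟩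
  · obtain ⟨-, hx, -⟩ := h
    have : (Cset m p).Nonempty := by
      rw [← Finset.card_pos]
      have : xC m p = (Cset m p).card := rfl
      omega
    obtain ⟨v, hv⟩ := this
    exact ⟨v, (Finset.mem_filter.1 hv).1⟩

/-- at every time there is a vertex untouched by Maker -/
lemma fresh_always (m : ℕ) (hm : 100 ≤ m) (hn : n = 7 * m)
    (ms : MBPos n → Sym2 (Fin n)) (t : ℕ) :
    ∃ v : Fin n, ∀ e ∈ (playMF ms (bs m) t).M, v ∉ e := by
  have key : ∀ k, (FR (playMF ms (bs m) (2 * k))).Nonempty :=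
    fun k => Inv_fresh hm (Inv_play m hm hn ms k)
  rcases Nat.even_or_odd t with ⟨k, hk⟩ | ⟨k, hk⟩
  · obtain ⟨v, hv⟩ := key k
    refine ⟨v, ?_⟩
    rw [mem_FR] at hv
    rw [hk, two_mul] at *
    exact hv
  · -- t = 2k+1 : the M-part agrees with time 2k+2
    have h2 : playMF ms (bs m) (2 * (k + 1)) =
        breakerMove (playMF ms (bs m) (2 * k + 1)) (bs m (playMF ms (bs m) (2 * k + 1))) := by
      have h21 : 2 * (k + 1) = (2 * k + 1) + 1 := by ring
      rw [h21, playMF]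
      have hmod : (2 * k + 1) % 2 = 1 := by omega
      simp [hmod]
    obtain ⟨v, hv⟩ := key (k + 1)
    rw [mem_FR] at hv
    rw [h2] at hv
    simp only [breakerMove] at hv
    refine ⟨v, ?_⟩
    rw [hk]
    exact hv

end SBC


/-- for every sufficiently large multiple `n` of `7`, in the
`(1:S_b)`-biased connectivity game on `K_n` (Maker moving first), if `b ≥ 3n/7`
then Breaker has a winning strategy; hence the threshold bias satisfies `b ≤ 3n/7`. -/
theorem star_bias_connectivity_breaker :
    ∃ N : ℕ, ∀ n, N ≤ n → 7 ∣ n → ∀ b : ℕ, 3 * n / 7 ≤ b →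
      BreakerWinsMF (n := n) (StarBias b) ConnWin := by
  refine ⟨700, fun n hN hdvd b hb => ?_⟩
  obtain ⟨m, rfl⟩ := hdvd
  have hm : 100 ≤ m := by omega
  have hn : 7 * m = 7 * m := rfl
  have hb' : 3 * m ≤ b := by
    have : 3 * (7 * m) / 7 = 3 * m := by omega
    omega
  have hn0 : 0 < 7 * m := by omega
  refine ⟨SBC.bs m, SBC.bs_legal m b hb' hn0, fun ms t => ?_⟩
  obtain ⟨v, hv⟩ := SBC.fresh_always m hm rfl ms (t := t)
  exact SBC.not_connWin_of_fresh (by omega) _ v hv
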